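/- arXiv:1807.09310 — 9 statements merged into one kernel-verified Lean document; each statement's English description precedes it below -/
import Mathlib

section
/- Let S be a subset of the n×n matrices over a field F such that every matrix in the F-linear span of S has minimal polynomial of degree at most 2. Then the length of S is at most 2·log₂(n), i.e., the F-linear span of words in S of length at most 2·log₂(n) equals the subalgebra generated by S. -/
/-- Words in `S` of length at most `k` (the empty word gives the identity). -/
def wordsLe {F : Type*} [Field F] {m : Type*} [Fintype m] [DecidableEq m]
    (S : Set (Matrix m m F)) (k : ℕ) : Set (Matrix m m F) :=
  {M | ∃ l : List (Matrix m m F), l.length ≤ k ∧ (∀ a ∈ l, a ∈ S) ∧ M = l.prod}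

/-- The length of a generating set: the least `k` such that the span of words of
length at most `k` equals the unital subalgebra generated by `S`. -/
noncomputable def matLen (F : Type*) [Field F] {m : Type*} [Fintype m] [DecidableEq m]
    (S : Set (Matrix m m F)) : ℕ :=
  sInf {k | Submodule.span F (wordsLe S k) = Subalgebra.toSubmodule (Algebra.adjoin F S)}

open scoped List

namespace PazAux

variable {F : Type*} [Field F] {n : ℕ}

abbrev MA (F : Type*) [Field F] (n : ℕ) := Matrix (Fin n) (Fin n) F

/-- span of words of length at most k -/
noncomputable def sw (S : Set (MA F n)) (k : ℕ) : Submodule F (MA F n) :=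
  Submodule.span F (wordsLe S k)

variable {S T : Set (MA F n)}

lemma prod_mem_wordsLe {l : List (MA F n)} (hl : ∀ a ∈ l, a ∈ S) {k : ℕ}
    (hk : l.length ≤ k) : l.prod ∈ wordsLe S k := ⟨l, hk, hl, rfl⟩

lemma one_mem_wordsLe (k : ℕ) : (1 : MA F n) ∈ wordsLe S k :=
  ⟨[], by simp, by simp, by simp⟩

lemma one_mem_sw (k : ℕ) : (1 : MA F n) ∈ sw S k :=
  Submodule.subset_span (one_mem_wordsLe k)

lemma wordsLe_mono {j k : ℕ} (h : j ≤ k) : wordsLe S j ⊆ wordsLe S k := by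
  rintro M ⟨l, hl, hmem, rfl⟩; exact ⟨l, hl.trans h, hmem, rfl⟩

lemma sw_mono {j k : ℕ} (h : j ≤ k) : sw S j ≤ sw (n := n) S k :=
  Submodule.span_mono (wordsLe_mono h)

lemma sw_mul_sw (j k : ℕ) : sw S j * sw S k ≤ sw (n := n) S (j + k) := by
  rw [sw, sw, Submodule.span_mul_span]
  apply Submodule.span_le.2
  rintro M ⟨a, ⟨la, hla, hmema, rfl⟩, b, ⟨lb, hlb, hmemb, rfl⟩, rfl⟩
  refine Submodule.subset_span ⟨la ++ lb, ?_, ?_, ?_⟩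
  · simpa using Nat.add_le_add hla hlb
  · intro a ha; rcases List.mem_append.1 ha with h | h
    · exact hmema a h
    · exact hmemb a h
  · simp

lemma mul_mem_sw {x y : MA F n} {j k : ℕ} (hx : x ∈ sw S j) (hy : y ∈ sw S k) :
    x * y ∈ sw S (j + k) :=
  sw_mul_sw j k (Submodule.mul_mem_mul hx hy)

lemma span_le_sw_one : Submodule.span F S ≤ sw (n := n) S 1 :=
  Submodule.span_mono (fun a ha => ⟨[a], by simp, by simpa using ha, by simp⟩)

lemma prod_mem_sw {l : List (MA F n)} (hl : ∀ a ∈ l, a ∈ Submodule.span F S) :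
    l.prod ∈ sw S l.length := by
  induction l with
  | nil => simpa using one_mem_sw 0
  | cons a t ih =>
    have ha : a ∈ sw S 1 := span_le_sw_one (hl a (by simp))
    have ht := ih (fun b hb => hl b (by simp [hb]))
    simpa [List.length_cons, Nat.add_comm] using mul_mem_sw ha ht

lemma sw_le_of_subset_span (h : S ⊆ (Submodule.span F T : Set (MA F n))) (k : ℕ) :
    sw S k ≤ sw (n := n) T k := by
  apply Submodule.span_le.2
  rintro M ⟨l, hl, hmem, rfl⟩
  exact sw_mono hl (prod_mem_sw (fun a ha => h (hmem a ha)))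

lemma sw_eq_of_span_eq (hST : S ⊆ (Submodule.span F T : Set (MA F n)))
    (hTS : T ⊆ (Submodule.span F S : Set (MA F n))) (k : ℕ) : sw S k = sw (n := n) T k :=
  le_antisymm (sw_le_of_subset_span hST k) (sw_le_of_subset_span hTS k)

lemma sw_succ_le (k : ℕ) : sw S (k + 1) ≤ sw (n := n) S k ⊔ sw S 1 * sw S k := by
  apply Submodule.span_le.2
  rintro M ⟨l, hl, hmem, rfl⟩
  match l with
  | [] => exact Submodule.mem_sup_left (one_mem_sw k)
  | a :: t =>
    have ha : a ∈ sw S 1 := span_le_sw_one (Submodule.subset_span (hmem a (by simp)))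
    have ht : t.prod ∈ sw S k :=
      Submodule.subset_span ⟨t, by have := hl; simp at this ⊢; omega,
        fun b hb => hmem b (by simp [hb]), rfl⟩
    exact Submodule.mem_sup_right (by simpa using Submodule.mul_mem_mul ha ht)

lemma sw_stab {k : ℕ} (h : sw S (k + 1) = sw (n := n) S k) :
    ∀ m, k ≤ m → sw S m = sw (n := n) S k := by
  intro m hm
  induction m, hm using Nat.le_induction with
  | base => rfl
  | succ m hm ih =>
    refine le_antisymm ?_ (ih ▸ sw_mono (Nat.le_succ m))
    refine (sw_succ_le m).trans ?_
    rw [ih]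
    refine sup_le le_rfl ?_
    exact (sw_mul_sw 1 k).trans (by rw [Nat.add_comm]; exact le_of_eq h)


lemma sw_le_adjoin (k : ℕ) :
    sw S k ≤ Subalgebra.toSubmodule (Algebra.adjoin F S) := by
  apply Submodule.span_le.2
  rintro M ⟨l, hl, hmem, rfl⟩
  show l.prod ∈ Algebra.adjoin F S
  exact list_prod_mem (fun a ha => Algebra.subset_adjoin (hmem a ha))

lemma sw_eq_adjoin_of {k : ℕ} (h : sw S (k + 1) = sw (n := n) S k) :
    sw S k = Subalgebra.toSubmodule (Algebra.adjoin F S) := by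
  refine le_antisymm (sw_le_adjoin k) ?_
  have hmul : ∀ x y : MA F n, x ∈ sw S k → y ∈ sw S k → x * y ∈ sw (n := n) S k := by
    intro x y hx hy
    have := mul_mem_sw hx hy
    rwa [sw_stab h (k + k) (by omega)] at this
  set Sa : Subalgebra F (MA F n) := Submodule.toSubalgebra (sw S k) (one_mem_sw k) hmul
  have hSle : S ⊆ (Sa : Set (MA F n)) := by
    intro a ha
    have : a ∈ sw S 1 := span_le_sw_one (Submodule.subset_span ha)
    have h1k : sw S 1 ≤ sw (n := n) S k := by
      rcases Nat.eq_zero_or_pos k with rfl | hk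
      · exact le_of_eq (by simpa using sw_stab h 1 (by omega))
      · exact sw_mono hk
    exact h1k this
  exact Algebra.adjoin_le hSle

lemma exists_sw_stab (S : Set (MA F n)) : ∃ k, sw S (k + 1) = sw (n := n) S k := by
  have hmono : Monotone (fun k => sw (n := n) S k) := fun a b hab => sw_mono hab
  obtain ⟨k, hk⟩ := monotone_stabilizes_iff_noetherian.mpr inferInstance ⟨_, hmono⟩
  exact ⟨k, (hk (k + 1) (by omega)).symm⟩

lemma matLen_mem (S : Set (MA F n)) :
    Submodule.span F (wordsLe S (matLen F S)) =
      Subalgebra.toSubmodule (Algebra.adjoin F S) := by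
  obtain ⟨k, hk⟩ := exists_sw_stab S
  have : {j | Submodule.span F (wordsLe S j) =
      Subalgebra.toSubmodule (Algebra.adjoin F S)}.Nonempty := ⟨k, sw_eq_adjoin_of hk⟩
  exact Nat.sInf_mem this

open Polynomial in
lemma sq_mem_span {F : Type*} [Field F] {n : ℕ} (A : Matrix (Fin n) (Fin n) F)
    (hA : (minpoly F A).natDegree ≤ 2) :
    A * A ∈ Submodule.span F {(1 : Matrix (Fin n) (Fin n) F), A} := by
  have hi : IsIntegral F A := Algebra.IsIntegral.isIntegral A
  have hmon : (minpoly F A).Monic := minpoly.monic hi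
  have haev : Polynomial.aeval A (minpoly F A) = 0 := minpoly.aeval F A
  set p := minpoly F A with hp
  have h1 : (1 : Matrix (Fin n) (Fin n) F) ∈ Submodule.span F {(1 : Matrix (Fin n) (Fin n) F), A} :=
    Submodule.subset_span (by simp)
  have h2 : A ∈ Submodule.span F {(1 : Matrix (Fin n) (Fin n) F), A} :=
    Submodule.subset_span (by simp)
  interval_cases hd : p.natDegree
  · have : p = 1 := hmon.natDegree_eq_zero.mp hd
    rw [this] at haev
    simp at haev
    -- (1 : matrix) = 0
    have : A * A = 0 := by
      calc A * A = A * A * 1 := by rw [mul_one]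
        _ = 0 := by rw [haev, mul_zero]
    rw [this]; exact Submodule.zero_mem _
  · have hexp := Polynomial.aeval_eq_sum_range (R := F) (S := Matrix (Fin n) (Fin n) F) (p := p) (x := A)
    rw [hd] at hexp
    rw [haev] at hexp
    rw [Finset.sum_range_succ, Finset.sum_range_one] at hexp
    have hc1 : p.coeff 1 = 1 := by have := hmon.coeff_natDegree; rwa [hd] at this
    rw [hc1, one_smul, pow_one, pow_zero] at hexp
    -- 0 = c0 • 1 + A
    have hA' : A = -(p.coeff 0) • (1 : Matrix (Fin n) (Fin n) F) := by
      have := hexp.symm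
      rw [neg_smul]; linear_combination (norm := module) this
    have h3 : A * A = -(p.coeff 0) • A := by
      nth_rewrite 1 [hA']; simp [smul_mul_assoc]
    rw [h3]
    exact Submodule.smul_mem _ _ h2
  · have hexp := Polynomial.aeval_eq_sum_range (R := F) (S := Matrix (Fin n) (Fin n) F) (p := p) (x := A)
    rw [hd] at hexp
    rw [haev] at hexp
    rw [Finset.sum_range_succ, Finset.sum_range_succ, Finset.sum_range_one] at hexp
    have hc2 : p.coeff 2 = 1 := by have := hmon.coeff_natDegree; rwa [hd] at this
    rw [hc2, one_smul, pow_one, pow_zero, pow_two] at hexp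
    have : A * A = -(p.coeff 0) • (1 : Matrix (Fin n) (Fin n) F) + -(p.coeff 1) • A := by
      rw [neg_smul, neg_smul]; linear_combination (norm := module) hexp.symm
    rw [this]
    exact Submodule.add_mem _ (Submodule.smul_mem _ _ h1) (Submodule.smul_mem _ _ h2)



section Comb
variable {m : ℕ} (x : Fin m → MA F n)

def px (l : List (Fin m)) : MA F n := (l.map x).prod

noncomputable def wF (U : Finset (Fin m)) : MA F n := px x (U.sort (· ≤ ·))

@[simp] lemma px_nil : px x [] = 1 := rfl

lemma px_cons (a : Fin m) (l : List (Fin m)) : px x (a :: l) = x a * px x l := by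
  simp [px]

lemma px_append (u v : List (Fin m)) : px x (u ++ v) = px x u * px x v := by
  simp [px]

lemma px_mem (l : List (Fin m)) : px x l ∈ sw (Set.range x) l.length := by
  refine Submodule.subset_span ⟨l.map x, by simp, ?_, rfl⟩
  intro a ha
  rcases List.mem_map.1 ha with ⟨i, _, rfl⟩
  exact Set.mem_range_self i

lemma wF_mem (U : Finset (Fin m)) : wF x U ∈ sw (Set.range x) U.card := by
  have := px_mem x (U.sort (· ≤ ·))
  rwa [Finset.length_sort] at this

variable (hac : ∀ i j, x i * x j + x j * x i ∈ sw (Set.range x) 1)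

include hac in
lemma swap_mem (u v : List (Fin m)) (i j : Fin m) :
    px x (u ++ i :: j :: v) + px x (u ++ j :: i :: v) ∈
      sw (Set.range x) (u.length + v.length + 1) := by
  have he : px x (u ++ i :: j :: v) + px x (u ++ j :: i :: v)
      = px x u * ((x i * x j + x j * x i) * px x v) := by
    simp only [px_append, px_cons]
    noncomm_ring
  rw [he]
  have h1 := mul_mem_sw (px_mem x u) (mul_mem_sw (hac i j) (px_mem x v))
  exact sw_mono (by omega) h1

variable (hsq : ∀ i, x i * x i ∈ sw (Set.range x) 1)

include hac hsq in
lemma dup_core : ∀ (w u v : List (Fin m)) (i : Fin m),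
    px x (u ++ i :: (w ++ i :: v)) ∈
      sw (Set.range x) (u.length + w.length + v.length + 1) := by
  intro w
  induction w with
  | nil =>
    intro u v i
    have he : px x (u ++ i :: ([] ++ i :: v)) = px x u * ((x i * x i) * px x v) := by
      simp only [List.nil_append, px_append, px_cons]
      noncomm_ring
    rw [he]
    have h1 := mul_mem_sw (px_mem x u) (mul_mem_sw (hsq i) (px_mem x v))
    exact sw_mono (by simp; omega) h1
  | cons a w' ih =>
    intro u v i
    have hswap := swap_mem x hac u (w' ++ i :: v) i a
    have hih := ih (u ++ [a]) v i
    have he : (u ++ [a]) ++ i :: (w' ++ i :: v) = u ++ a :: i :: (w' ++ i :: v) := by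
      simp
    rw [he] at hih
    have hlen1 : u.length + (w' ++ i :: v).length + 1
        = u.length + (a :: w').length + v.length + 1 := by simp; omega
    have hlen2 : (u ++ [a]).length + w'.length + v.length + 1
        = u.length + (a :: w').length + v.length + 1 := by simp; omega
    rw [hlen1] at hswap
    rw [hlen2] at hih
    have : px x (u ++ i :: (a :: w' ++ i :: v))
        = (px x (u ++ i :: a :: (w' ++ i :: v)) + px x (u ++ a :: i :: (w' ++ i :: v)))
          - px x (u ++ a :: i :: (w' ++ i :: v)) := by
      simp only [List.cons_append]
      abel
    rw [this]
    exact Submodule.sub_mem _ hswap hih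

lemma exists_dup_decomp {α : Type*} : ∀ {l : List α}, ¬ l.Nodup →
    ∃ (u w v : List α) (i : α), l = u ++ i :: (w ++ i :: v) := by
  intro l
  induction l with
  | nil => intro h; exact absurd List.nodup_nil h
  | cons a t ih =>
    intro h
    rw [List.nodup_cons] at h
    push_neg at h
    by_cases hat : a ∈ t
    · obtain ⟨w, v, rfl⟩ := List.append_of_mem hat
      exact ⟨[], w, v, a, by simp⟩
    · obtain ⟨u, w, v, i, rfl⟩ := ih (h hat)
      exact ⟨a :: u, w, v, i, by simp⟩

include hac hsq in
lemma px_not_nodup {l : List (Fin m)} (h : ¬ l.Nodup) :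
    px x l ∈ sw (Set.range x) (l.length - 1) := by
  obtain ⟨u, w, v, i, rfl⟩ := exists_dup_decomp h
  have := dup_core x hac hsq w u v i
  have hlen : u.length + w.length + v.length + 1 = (u ++ i :: (w ++ i :: v)).length - 1 := by
    simp; omega
  rwa [hlen] at this

include hac in
lemma insertL : ∀ (s : List (Fin m)), s.Pairwise (· ≤ ·) → ∀ a, a ∉ s →
    ∃ c : F, c ≠ 0 ∧
      px x (a :: s) - c • px x (List.orderedInsert (· ≤ ·) a s) ∈ sw (Set.range x) s.length := by
  intro s
  induction s with
  | nil =>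
    intro _ a _
    exact ⟨1, one_ne_zero, by simp [List.orderedInsert]⟩
  | cons b t ih =>
    intro hsort a ha
    by_cases hab : a ≤ b
    · refine ⟨1, one_ne_zero, ?_⟩
      rw [List.orderedInsert, if_pos hab]
      simp
    · have hs' : t.Pairwise (· ≤ ·) := (List.pairwise_cons.mp hsort).2
      have hat : a ∉ t := fun h' => ha (by simp [h'])
      obtain ⟨c, hc, hmem⟩ := ih hs' a hat
      have hswap := swap_mem x hac [] t a b
      simp only [List.nil_append, List.length_nil, Nat.zero_add] at hswap
      -- px (b :: a :: t) - c • px (b :: orderedInsert a t) ∈ sw (t.length + 1)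
      have hb1 : x b ∈ sw (Set.range x) 1 := by
        have := px_mem x [b]; simpa [px_cons] using this
      have hmul : px x (b :: a :: t) - c • px x (b :: List.orderedInsert (· ≤ ·) a t)
          ∈ sw (Set.range x) (1 + t.length) := by
        have := mul_mem_sw hb1 hmem
        have he : x b * (px x (a :: t) - c • px x (List.orderedInsert (· ≤ ·) a t))
            = px x (b :: a :: t) - c • px x (b :: List.orderedInsert (· ≤ ·) a t) := by
          simp only [px_cons, mul_sub, mul_smul_comm]
        rwa [he] at this
      refine ⟨-c, neg_ne_zero.mpr hc, ?_⟩
      rw [List.orderedInsert, if_neg hab]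
      have he2 : px x (a :: b :: t) - (-c) • px x (b :: List.orderedInsert (· ≤ ·) a t)
          = (px x (a :: b :: t) + px x (b :: a :: t))
            - (px x (b :: a :: t) - c • px x (b :: List.orderedInsert (· ≤ ·) a t)) := by
        simp only [neg_smul, sub_neg_eq_add]
        abel
      rw [he2]
      have hlt : t.length + 1 = (b :: t).length := by simp
      have hlt2 : 1 + t.length = (b :: t).length := by simp; omega
      exact Submodule.sub_mem _ (hlt ▸ hswap) (hlt2 ▸ hmul)

lemma sort_insert' {a : Fin m} {U : Finset (Fin m)} (ha : a ∉ U) :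
    Finset.sort (insert a U) (· ≤ ·) = List.orderedInsert (· ≤ ·) a (Finset.sort U (· ≤ ·)) := by
  apply List.Perm.eq_of_pairwise' (Finset.pairwise_sort _ _)
    ((Finset.pairwise_sort _ _).orderedInsert a _) ?_
  have h1 : Finset.sort (insert a U) (· ≤ ·) ~ a :: Finset.sort U (· ≤ ·) := by
    rw [← Multiset.coe_eq_coe]
    push_cast [Finset.sort_eq]
    rw [Finset.insert_val_of_notMem ha, ← Finset.sort_eq U (· ≤ ·)]
    rfl
  exact h1.trans (List.perm_orderedInsert _ a _).symm

include hac in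
lemma sortL : ∀ (l : List (Fin m)), l.Nodup →
    ∃ c : F, c ≠ 0 ∧
      px x l - c • wF x l.toFinset ∈ sw (Set.range x) (l.length - 1) := by
  intro l
  induction l with
  | nil => exact fun _ => ⟨1, one_ne_zero, by simp [wF, Finset.sort_empty]⟩
  | cons a t ih =>
    intro hnd
    rw [List.nodup_cons] at hnd
    obtain ⟨hat, ht⟩ := hnd
    match t, ht with
    | [], _ =>
      refine ⟨1, one_ne_zero, ?_⟩
      simp [wF, px_cons]
    | b :: t', ht =>
      set t := b :: t' with hteq
      obtain ⟨c₁, hc₁, h₁⟩ := ih ht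
      have hlt : 1 ≤ t.length := by simp [hteq]
      have hatT : a ∉ t.toFinset := by simp [List.mem_toFinset]; exact hat
      have hanotsort : a ∉ t.toFinset.sort (· ≤ ·) := by
        rw [Finset.mem_sort]; exact hatT
      obtain ⟨c₂, hc₂, h₂⟩ := insertL x hac (t.toFinset.sort (· ≤ ·))
        (Finset.pairwise_sort _ _) a hanotsort
      have hlsort : (t.toFinset.sort (· ≤ ·)).length = t.length := by
        rw [Finset.length_sort, List.toFinset_card_of_nodup ht]
      rw [hlsort] at h₂
      have hwf : px x (a :: t.toFinset.sort (· ≤ ·)) = x a * wF x t.toFinset := by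
        rw [px_cons]; rfl
      have hoi : px x (List.orderedInsert (· ≤ ·) a (t.toFinset.sort (· ≤ ·)))
          = wF x (insert a t.toFinset) := by
        rw [wF, sort_insert' hatT]
      rw [hwf, hoi] at h₂
      have htf : (a :: t).toFinset = insert a t.toFinset := List.toFinset_cons
      rw [htf]
      refine ⟨c₁ * c₂, mul_ne_zero hc₁ hc₂, ?_⟩
      have key : px x (a :: t) - (c₁ * c₂) • wF x (insert a t.toFinset)
          = c₁ • (x a * wF x t.toFinset - c₂ • wF x (insert a t.toFinset))
            + x a * (px x t - c₁ • wF x t.toFinset) := by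
        rw [px_cons]
        simp only [mul_sub, mul_smul_comm, smul_sub, smul_smul]
        abel
      rw [key]
      have hm1 : c₁ • (x a * wF x t.toFinset - c₂ • wF x (insert a t.toFinset))
          ∈ sw (Set.range x) ((a :: t).length - 1) := by
        apply Submodule.smul_mem
        refine sw_mono ?_ h₂; simp
      have hm2 : x a * (px x t - c₁ • wF x t.toFinset)
          ∈ sw (Set.range x) ((a :: t).length - 1) := by
        have hb1 : x a ∈ sw (Set.range x) 1 := by
          have := px_mem x [a]; simpa [px_cons] using this
        have := mul_mem_sw hb1 h₁
        refine sw_mono ?_ this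
        simp; omega
      exact Submodule.add_mem _ hm1 hm2

include hac hsq in
lemma wf_prod_lower {T U V : Finset (Fin m)} {l0 : ℕ} (hl0 : 1 ≤ l0) (hTcard : T.card = l0)
    (hUT : U ⊆ T) (hVT : V ⊆ T) (hVU : V ≠ U) (hcard : V.card ≤ U.card) :
    wF x V * wF x (T \ U) ∈ sw (Set.range x) (l0 - 1) := by
  set l : List (Fin m) := Finset.sort V (· ≤ ·) ++ Finset.sort (T \ U) (· ≤ ·) with hl
  have hpx : px x l = wF x V * wF x (T \ U) := px_append x _ _
  have hlen : l.length = V.card + (l0 - U.card) := by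
    simp [hl, Finset.length_sort, Finset.card_sdiff_of_subset hUT, hTcard]
  have hUle : U.card ≤ l0 := hTcard ▸ Finset.card_le_card hUT
  rw [← hpx]
  by_cases hnd : l.Nodup
  · have hdisj := (List.nodup_append.mp hnd).2.2
    have hVU' : V ⊆ U := by
      intro a haV
      by_contra hnU
      exact hdisj a ((Finset.mem_sort _).mpr haV)
        a ((Finset.mem_sort _).mpr (Finset.mem_sdiff.mpr ⟨hVT haV, hnU⟩)) rfl
    have hVlt : V.card < U.card := Finset.card_lt_card (hVU'.ssubset_of_ne hVU)
    have hle : l.length ≤ l0 - 1 := by omega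
    exact sw_mono hle (px_mem x l)
  · have h1 := px_not_nodup x hac hsq hnd
    have hle : l.length - 1 ≤ l0 - 1 := by omega
    exact sw_mono hle h1

include hac in
lemma wf_prod_main {T U : Finset (Fin m)} {l0 : ℕ} (hTcard : T.card = l0) (hUT : U ⊆ T) :
    ∃ c : F, c ≠ 0 ∧
      wF x U * wF x (T \ U) - c • wF x T ∈ sw (Set.range x) (l0 - 1) := by
  set l : List (Fin m) := Finset.sort U (· ≤ ·) ++ Finset.sort (T \ U) (· ≤ ·) with hl
  have hpx : px x l = wF x U * wF x (T \ U) := px_append x _ _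
  have hnd : l.Nodup := by
    rw [List.nodup_append]
    refine ⟨Finset.sort_nodup _ _, Finset.sort_nodup _ _, ?_⟩
    intro a ha b ha' hab
    rw [Finset.mem_sort] at ha ha'
    exact (Finset.mem_sdiff.mp ha').2 (hab ▸ ha)
  have htf : l.toFinset = T := by
    rw [hl, List.toFinset_append]
    rw [Finset.sort_toFinset, Finset.sort_toFinset]
    exact Finset.union_sdiff_of_subset hUT
  have hUle : U.card ≤ l0 := hTcard ▸ Finset.card_le_card hUT
  have hlen : l.length = l0 := by
    simp [hl, Finset.length_sort, Finset.card_sdiff_of_subset hUT, hTcard]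
    omega
  obtain ⟨c, hc, hmem⟩ := sortL x hac l hnd
  rw [htf, hlen, hpx] at hmem
  exact ⟨c, hc, hmem⟩

include hac hsq in
lemma indep {T : Finset (Fin m)} {l0 : ℕ} (hl0 : 1 ≤ l0) (hTcard : T.card = l0)
    (hT : wF x T ∉ sw (Set.range x) (l0 - 1)) :
    LinearIndependent F (fun U : ↥T.powerset => wF x U.val) := by
  classical
  rw [Fintype.linearIndependent_iff]
  intro g hg
  by_contra hnall
  push_neg at hnall
  obtain ⟨i₀, hi₀⟩ := hnall
  set s := Finset.univ.filter (fun i : ↥T.powerset => g i ≠ 0) with hs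
  have hsne : s.Nonempty := ⟨i₀, by simp [hs, hi₀]⟩
  obtain ⟨U₀, hU₀s, hmax⟩ := Finset.exists_max_image s (fun i => (i.val).card) hsne
  have hgU₀ : g U₀ ≠ 0 := by
    have := (Finset.mem_filter.mp hU₀s).2; exact this
  have hU₀T : U₀.val ⊆ T := Finset.mem_powerset.mp U₀.2
  obtain ⟨c, hc, hmain⟩ := wf_prod_main x hac hTcard hU₀T
  have h0 : (∑ i, g i • wF x i.val) * wF x (T \ U₀.val) = 0 := by rw [hg, zero_mul]
  rw [Finset.sum_mul] at h0
  simp_rw [smul_mul_assoc] at h0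
  rw [← Finset.add_sum_erase _ _ (Finset.mem_univ U₀)] at h0
  have hrest : (∑ i ∈ Finset.univ.erase U₀, g i • (wF x i.val * wF x (T \ U₀.val)))
      ∈ sw (Set.range x) (l0 - 1) := by
    apply Submodule.sum_mem
    intro i hi
    rcases eq_or_ne (g i) 0 with h | h
    · rw [h, zero_smul]; exact Submodule.zero_mem _
    · have his : i ∈ s := by simp [hs, h]
      have hle : (i.val).card ≤ (U₀.val).card := hmax i his
      have hiU₀ : i.val ≠ U₀.val := by
        intro hEq; exact (Finset.mem_erase.mp hi).1 (Subtype.ext hEq)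
      exact Submodule.smul_mem _ _
        (wf_prod_lower x hac hsq hl0 hTcard hU₀T (Finset.mem_powerset.mp i.2) hiU₀ hle)
  have hA : g U₀ • (wF x U₀.val * wF x (T \ U₀.val))
      = - (∑ i ∈ Finset.univ.erase U₀, g i • (wF x i.val * wF x (T \ U₀.val))) :=
    eq_neg_of_add_eq_zero_left h0
  have hkey : (g U₀ * c) • wF x T
      = g U₀ • (wF x U₀.val * wF x (T \ U₀.val))
        - g U₀ • (wF x U₀.val * wF x (T \ U₀.val) - c • wF x T) := by
    rw [smul_sub, smul_smul]; abel
  rw [hA] at hkey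
  have hmemT : (g U₀ * c) • wF x T ∈ sw (Set.range x) (l0 - 1) := by
    rw [hkey]
    exact Submodule.sub_mem _ (Submodule.neg_mem _ hrest) (Submodule.smul_mem _ _ hmain)
  have hnz : g U₀ * c ≠ 0 := mul_ne_zero hgU₀ hc
  refine hT ?_
  have := Submodule.smul_mem _ (g U₀ * c)⁻¹ hmemT
  rwa [inv_smul_smul₀ hnz] at this

lemma exists_preimage_list : ∀ (la : List (MA F n)), (∀ a ∈ la, a ∈ Set.range x) →
    ∃ li : List (Fin m), la = li.map x := by
  intro la
  induction la with
  | nil => exact fun _ => ⟨[], rfl⟩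
  | cons a t ih =>
    intro hmem
    obtain ⟨i, hi⟩ := hmem a (by simp)
    obtain ⟨li, hli⟩ := ih (fun b hb => hmem b (by simp [hb]))
    exact ⟨i :: li, by simp [hli, hi]⟩

include hac hsq in
lemma exists_bad {l0 : ℕ} (hl0 : 1 ≤ l0)
    (hne : sw (Set.range x) l0 ≠ sw (Set.range x) (l0 - 1)) :
    ∃ T : Finset (Fin m), T.card = l0 ∧ wF x T ∉ sw (Set.range x) (l0 - 1) := by
  by_contra hcon
  push_neg at hcon
  apply hne
  refine le_antisymm ?_ (sw_mono (by omega))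
  apply Submodule.span_le.2
  rintro M ⟨la, hlen, hmem, rfl⟩
  obtain ⟨li, rfl⟩ := exists_preimage_list x la hmem
  rw [List.length_map] at hlen
  show px x li ∈ (sw (Set.range x) (l0 - 1) : Set (MA F n))
  by_cases hnd : li.Nodup
  · obtain ⟨c, hc, hr⟩ := sortL x hac li hnd
    have hcard : li.toFinset.card = li.length := List.toFinset_card_of_nodup hnd
    have hwfm : wF x li.toFinset ∈ sw (Set.range x) (l0 - 1) := by
      rcases eq_or_lt_of_le (show li.toFinset.card ≤ l0 by omega) with hEq | hlt
      · exact hcon _ hEq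
      · exact sw_mono (by omega) (wF_mem x li.toFinset)
    have hsplit : px x li = (px x li - c • wF x li.toFinset) + c • wF x li.toFinset := by
      abel
    rw [hsplit]
    exact Submodule.add_mem _ (sw_mono (by omega) hr) (Submodule.smul_mem _ _ hwfm)
  · exact sw_mono (by omega) (px_not_nodup x hac hsq hnd)

end Comb

end PazAux

open PazAux

theorem stmt_0 {F : Type*} [Field F] {n : ℕ} (S : Set (Matrix (Fin n) (Fin n) F))
    (h : ∀ A ∈ Submodule.span F S, (minpoly F A).natDegree ≤ 2) :
    (matLen F S : ℝ) ≤ 2 * Real.logb 2 n := by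
  classical
  have hmem := matLen_mem S
  set l0 := matLen F S with hl0def
  have hlogb_nonneg : 0 ≤ 2 * Real.logb 2 (n : ℝ) := by
    rcases Nat.eq_zero_or_pos n with rfl | hn
    · simp
    · have : (1:ℝ) ≤ (n:ℝ) := by exact_mod_cast hn
      have := Real.logb_nonneg (b := 2) (by norm_num) this
      linarith
  rcases Nat.eq_zero_or_pos l0 with h0 | hpos
  · rw [h0]; simpa using hlogb_nonneg
  -- set up the basis of span S
  set V : Submodule F (MA F n) := Submodule.span F S with hV
  let b := Module.finBasis F V
  set m : ℕ := Module.finrank F V with hm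
  set x : Fin m → MA F n := fun i => ((b i : V) : MA F n) with hx
  have hxS : ∀ i, x i ∈ Submodule.span F S := fun i => (b i).2
  have hspan : Submodule.span F (Set.range x) = Submodule.span F S := by
    have hrange : Set.range x = V.subtype '' (Set.range b) := by
      ext a; constructor
      · rintro ⟨i, rfl⟩; exact ⟨b i, ⟨i, rfl⟩, rfl⟩
      · rintro ⟨v, ⟨i, rfl⟩, rfl⟩; exact ⟨i, rfl⟩
    rw [hrange, Submodule.span_image, b.span_eq, Submodule.map_subtype_top]
  have hS1 : S ⊆ (Submodule.span F (Set.range x) : Set (MA F n)) := by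
    rw [hspan]; exact Submodule.subset_span
  have hX1 : Set.range x ⊆ (Submodule.span F S : Set (MA F n)) := by
    rintro _ ⟨i, rfl⟩; exact hxS i
  have hsw : ∀ k, sw S k = sw (Set.range x) k := fun k =>
    sw_eq_of_span_eq hS1 hX1 k
  -- quadratic conditions
  have hpair : ∀ z : MA F n, z ∈ sw (Set.range x) 1 →
      Submodule.span F {(1 : MA F n), z} ≤ sw (Set.range x) 1 := by
    intro z hz
    apply Submodule.span_le.2
    rintro a (rfl | rfl)
    · exact one_mem_sw 1
    · exact hz
  have hz1 : ∀ z : MA F n, z ∈ Submodule.span F S → z ∈ sw (Set.range x) 1 := by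
    intro z hz
    rw [← hsw 1]
    exact span_le_sw_one hz
  have hsq : ∀ i, x i * x i ∈ sw (Set.range x) 1 := by
    intro i
    exact hpair _ (hz1 _ (hxS i)) (sq_mem_span (x i) (h _ (hxS i)))
  have hac : ∀ i j, x i * x j + x j * x i ∈ sw (Set.range x) 1 := by
    intro i j
    have hij : x i + x j ∈ Submodule.span F S := add_mem (hxS i) (hxS j)
    have h1 : (x i + x j) * (x i + x j) ∈ sw (Set.range x) 1 :=
      hpair _ (hz1 _ hij) (sq_mem_span _ (h _ hij))
    have h2 := hpair _ (hz1 _ (hxS i)) (sq_mem_span (x i) (h _ (hxS i)))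
    have h3 := hpair _ (hz1 _ (hxS j)) (sq_mem_span (x j) (h _ (hxS j)))
    have he : x i * x j + x j * x i
        = (x i + x j) * (x i + x j) - x i * x i - x j * x j := by noncomm_ring
    rw [he]
    exact Submodule.sub_mem _ (Submodule.sub_mem _ h1 h2) h3
  -- non-stabilization at l0 - 1
  have hne : sw (Set.range x) l0 ≠ sw (Set.range x) (l0 - 1) := by
    intro hEq
    have hmm : (l0 - 1) ∈ {k | Submodule.span F (wordsLe S k) =
        Subalgebra.toSubmodule (Algebra.adjoin F S)} := by
      show sw S (l0 - 1) = _
      rw [hsw, ← hEq, ← hsw]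
      exact hmem
    have hle : matLen F S ≤ l0 - 1 := Nat.sInf_le hmm
    omega
  obtain ⟨T, hTcard, hT⟩ := exists_bad x hac hsq hpos hne
  have hind := indep x hac hsq hpos hTcard hT
  have hcount := hind.fintype_card_le_finrank
  rw [Fintype.card_coe, Finset.card_powerset, hTcard] at hcount
  have hfr : Module.finrank F (MA F n) = n * n := by
    simp [Module.finrank_matrix]
  rw [hfr] at hcount
  -- numerics
  have hn2 : 2 ≤ n := by
    by_contra hc
    have hn1 : n ≤ 1 := by omega
    have h2l : 2 ≤ 2 ^ l0 := by
      calc 2 = 2 ^ 1 := by norm_num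
        _ ≤ 2 ^ l0 := Nat.pow_le_pow_right (by norm_num) hpos
    nlinarith
  have hreal : ((2:ℝ)) ^ l0 ≤ ((n:ℝ)) ^ 2 := by
    have : (2:ℕ) ^ l0 ≤ n ^ 2 := by rw [pow_two]; exact hcount
    exact_mod_cast this
  have hpow_pos : (0:ℝ) < (2:ℝ) ^ l0 := by positivity
  calc (l0 : ℝ) = Real.logb 2 ((2:ℝ) ^ l0) := by
        rw [Real.logb_pow, Real.logb_self_eq_one (by norm_num)]
        ring
    _ ≤ Real.logb 2 ((n:ℝ) ^ 2) :=
        Real.logb_le_logb_of_le (by norm_num) hpow_pos hreal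
    _ = 2 * Real.logb 2 (n : ℝ) := by
        rw [Real.logb_pow]; norm_num
end

section
/- Let A be an n×n matrix over an algebraically closed field F with invariant factors f₁ | f₂ | ⋯ | f_k and minimal polynomial φ = f_k. Let ψ be a polynomial of degree deg(φ) − 1 that divides φ and is divisible by f_{k−1} (when k ≥ 2). Then ψ(A) is nonzero and rank(ψ(A)) ≤ n / deg(φ). -/
def companionMatrix {F : Type*} [Field F] (f : Polynomial F) :
    Matrix (Fin f.natDegree) (Fin f.natDegree) F := fun i j =>
  (if (i : ℕ) = (j : ℕ) + 1 then 1 else 0) +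
    (if (j : ℕ) = f.natDegree - 1 then -(f.coeff i) else 0)

open Polynomial Matrix

section Companion
variable {F : Type*} [Field F] (f : Polynomial F)

lemma companion_pow_col0 (h0 : 0 < f.natDegree) (d : ℕ) :
    ∀ (_ : d < f.natDegree) (i : Fin f.natDegree),
    (companionMatrix f ^ d) i ⟨0, h0⟩ = if (i : ℕ) = d then 1 else 0 := by
  induction d with
  | zero =>
    intro _ i
    rw [pow_zero, Matrix.one_apply]
    simp [Fin.ext_iff]
  | succ d ih =>
    intro hd i
    have hd' : d < f.natDegree := by omega
    rw [pow_succ', Matrix.mul_apply]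
    have hstep : ∀ k : Fin f.natDegree,
        companionMatrix f i k * (companionMatrix f ^ d) k ⟨0, h0⟩
          = if k = (⟨d, hd'⟩ : Fin f.natDegree) then companionMatrix f i ⟨d, hd'⟩ else 0 := by
      intro k
      rw [ih hd' k]
      by_cases hk : k = (⟨d, hd'⟩ : Fin f.natDegree)
      · subst hk; simp
      · rw [if_neg (fun h => hk (Fin.ext h)), if_neg hk, mul_zero]
    rw [Finset.sum_congr rfl fun k _ => hstep k, Finset.sum_ite_eq' Finset.univ _ _,
      if_pos (Finset.mem_univ _)]
    show (if (i : ℕ) = d + 1 then (1:F) else 0) + (if d = f.natDegree - 1 then -f.coeff i else 0)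
        = if (i : ℕ) = d + 1 then 1 else 0
    rw [if_neg (show ¬ d = f.natDegree - 1 by omega), add_zero]

lemma aeval_companion_col0 (h0 : 0 < f.natDegree) (g : Polynomial F)
    (hg : g.natDegree < f.natDegree) (i : Fin f.natDegree) :
    (aeval (companionMatrix f) g) i ⟨0, h0⟩ = g.coeff i := by
  rw [Polynomial.aeval_eq_sum_range' hg]
  rw [Matrix.sum_apply]
  rw [Finset.sum_congr rfl fun d hd =>
    show (g.coeff d • companionMatrix f ^ d) i ⟨0, h0⟩
        = if (i : ℕ) = d then g.coeff d else 0 from by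
      rw [Matrix.smul_apply, companion_pow_col0 f h0 d (Finset.mem_range.mp hd)]
      by_cases h : (i : ℕ) = d
      · rw [if_pos h, if_pos h, smul_eq_mul, mul_one]
      · rw [if_neg h, if_neg h, smul_eq_mul, mul_zero]]
  rw [Finset.sum_ite_eq (Finset.range f.natDegree) (i : ℕ) (fun d => g.coeff d),
    if_pos (Finset.mem_range.mpr i.2)]

lemma aeval_companion_self_col0 (hf : f.Monic) (h0 : 0 < f.natDegree) (i : Fin f.natDegree) :
    (aeval (companionMatrix f) f) i ⟨0, h0⟩ = 0 := by
  have hsub : (f - X ^ f.natDegree).natDegree < f.natDegree := by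
    rcases eq_or_ne (f - X ^ f.natDegree) 0 with h | h
    · rw [h]; simpa using h0
    · rw [Polynomial.natDegree_lt_iff_degree_lt h]
      have := Polynomial.degree_sub_lt
        (by rw [Polynomial.degree_X_pow, Polynomial.degree_eq_natDegree hf.ne_zero])
        hf.ne_zero (by rw [hf.leadingCoeff, Polynomial.leadingCoeff_X_pow])
      rwa [Polynomial.degree_eq_natDegree hf.ne_zero] at this
  have hdecomp : aeval (companionMatrix f) f
      = companionMatrix f ^ f.natDegree + aeval (companionMatrix f) (f - X ^ f.natDegree) := by
    rw [map_sub, Polynomial.aeval_X_pow]; abel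
  have hpow : (companionMatrix f ^ f.natDegree) i ⟨0, h0⟩ = -f.coeff i := by
    have hm : f.natDegree - 1 + 1 = f.natDegree := by omega
    have hps := pow_succ' (companionMatrix f) (f.natDegree - 1)
    rw [hm] at hps
    rw [hps, Matrix.mul_apply]
    have hstep : ∀ k : Fin f.natDegree,
        companionMatrix f i k * (companionMatrix f ^ (f.natDegree - 1)) k ⟨0, h0⟩
          = if k = (⟨f.natDegree - 1, by omega⟩ : Fin f.natDegree)
              then companionMatrix f i ⟨f.natDegree - 1, by omega⟩ else 0 := by
      intro k
      rw [companion_pow_col0 f h0 _ (by omega) k]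
      by_cases hk : k = (⟨f.natDegree - 1, by omega⟩ : Fin f.natDegree)
      · subst hk; simp
      · rw [if_neg (fun h => hk (Fin.ext h)), if_neg hk, mul_zero]
    rw [Finset.sum_congr rfl fun k _ => hstep k, Finset.sum_ite_eq' Finset.univ _ _,
      if_pos (Finset.mem_univ _)]
    show (if (i : ℕ) = (f.natDegree - 1) + 1 then (1:F) else 0)
        + (if f.natDegree - 1 = f.natDegree - 1 then -f.coeff i else 0) = -f.coeff i
    rw [if_neg (show ¬ (i : ℕ) = (f.natDegree - 1) + 1 by omega), if_pos rfl, zero_add]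
  rw [hdecomp, Matrix.add_apply, hpow, aeval_companion_col0 f h0 _ hsub i,
    Polynomial.coeff_sub, Polynomial.coeff_X_pow,
    if_neg (show ¬ (i : ℕ) = f.natDegree by omega)]
  ring

lemma aeval_companion_self (hf : f.Monic) (h0 : 0 < f.natDegree) :
    aeval (companionMatrix f) f = 0 := by
  ext i j
  have hcomm : aeval (companionMatrix f) f * companionMatrix f ^ (j : ℕ)
      = companionMatrix f ^ (j : ℕ) * aeval (companionMatrix f) f := by
    rw [← Polynomial.aeval_X_pow (R := F) (x := companionMatrix f) (n := (j : ℕ)), ← _root_.map_mul, mul_comm, _root_.map_mul]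
  have h1 : (aeval (companionMatrix f) f * companionMatrix f ^ (j : ℕ)) i ⟨0, h0⟩
      = (aeval (companionMatrix f) f) i j := by
    rw [Matrix.mul_apply]
    rw [Finset.sum_congr rfl fun k _ =>
      show (aeval (companionMatrix f) f) i k * (companionMatrix f ^ (j:ℕ)) k ⟨0, h0⟩
          = if k = j then (aeval (companionMatrix f) f) i k else 0 from by
        rw [companion_pow_col0 f h0 _ j.2 k]
        by_cases hk : k = j
        · rw [if_pos hk, if_pos (by rw [hk]), mul_one]
        · rw [if_neg (fun h => hk (Fin.ext h)), if_neg hk, mul_zero]]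
    rw [Finset.sum_ite_eq' Finset.univ _ _, if_pos (Finset.mem_univ _)]
  have h2 : (companionMatrix f ^ (j : ℕ) * aeval (companionMatrix f) f) i ⟨0, h0⟩ = 0 := by
    rw [Matrix.mul_apply]
    exact Finset.sum_eq_zero fun k _ => by
      rw [aeval_companion_self_col0 f hf h0 k, mul_zero]
  rw [Matrix.zero_apply, ← h1, hcomm, h2]

lemma aeval_companion_entry (h0 : 0 < f.natDegree) (ψ : Polynomial F)
    (hψ : ψ.natDegree < f.natDegree) {a : F}
    (hrel : aeval (companionMatrix f) ψ * companionMatrix f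
      = a • aeval (companionMatrix f) ψ)
    (i j : Fin f.natDegree) :
    (aeval (companionMatrix f) ψ) i j = ψ.coeff i * a ^ (j : ℕ) := by
  set M := aeval (companionMatrix f) ψ with hM
  suffices h : ∀ d (hd : d < f.natDegree) (i : Fin f.natDegree),
      M i ⟨d, hd⟩ = ψ.coeff i * a ^ d by
    have := h j j.2 i
    simpa using this
  intro d
  induction d with
  | zero =>
    intro hd i
    rw [hM, aeval_companion_col0 f h0 ψ hψ i, pow_zero, mul_one]
  | succ d ih =>
    intro hd i
    have hd' : d < f.natDegree := by omega
    have hent : (M * companionMatrix f) i ⟨d, hd'⟩ = M i ⟨d + 1, hd⟩ := by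
      rw [Matrix.mul_apply]
      rw [Finset.sum_congr rfl fun k _ =>
        show M i k * companionMatrix f k ⟨d, hd'⟩
            = if k = (⟨d + 1, hd⟩ : Fin f.natDegree) then M i k else 0 from by
          show M i k * ((if (k : ℕ) = d + 1 then (1:F) else 0)
            + (if d = f.natDegree - 1 then -f.coeff k else 0)) = _
          rw [if_neg (show ¬ d = f.natDegree - 1 by omega), add_zero]
          by_cases hk : k = (⟨d + 1, hd⟩ : Fin f.natDegree)
          · rw [if_pos hk, if_pos (by rw [hk]), mul_one]
          · rw [if_neg (fun h => hk (Fin.ext h)), if_neg hk, mul_zero]]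
      rw [Finset.sum_ite_eq' Finset.univ _ _, if_pos (Finset.mem_univ _)]
    rw [← hent, hrel, Matrix.smul_apply, ih hd' i, smul_eq_mul]
    ring

end Companion

/-- `Matrix.blockDiagonal'` as an `AlgHom`. -/
def blockDiagonal'AlgHom (R : Type*) {o : Type*} (m' : o → Type*) (α : Type*)
    [CommSemiring R] [Semiring α] [Algebra R α] [Fintype o] [DecidableEq o]
    [∀ i, Fintype (m' i)] [∀ i, DecidableEq (m' i)] :
    (∀ i, Matrix (m' i) (m' i) α) →ₐ[R] Matrix (Σ i, m' i) (Σ i, m' i) α :=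
  { Matrix.blockDiagonal'RingHom m' α with
    commutes' := fun r => by
      show Matrix.blockDiagonal' _ = _
      ext ⟨i, x⟩ ⟨j, y⟩
      rcases eq_or_ne i j with rfl | hij
      · rw [Matrix.blockDiagonal'_apply_eq]
        by_cases hxy : x = y
        · subst hxy
          simp [Matrix.algebraMap_matrix_apply]
        · simp [Matrix.algebraMap_matrix_apply, hxy]
      · rw [Matrix.blockDiagonal'_apply_ne _ _ _ hij]
        rw [Matrix.algebraMap_matrix_apply, if_neg (by simp [hij])] }

lemma aeval_unit_conj {R A : Type*} [CommSemiring R] [Ring A] [Algebra R A]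
    (u : Aˣ) (x : A) (p : R[X]) :
    Polynomial.aeval ((u : A) * x * (↑u⁻¹ : A)) p
      = (u : A) * Polynomial.aeval x p * (↑u⁻¹ : A) := by
  have hpow : ∀ n : ℕ, ((u : A) * x * ↑u⁻¹) ^ n = (u : A) * x ^ n * ↑u⁻¹ := by
    intro n
    induction n with
    | zero => simp
    | succ n ih =>
      rw [pow_succ, ih, pow_succ]
      have : (↑u⁻¹ : A) * ((u : A) * x * ↑u⁻¹) = x * ↑u⁻¹ := by
        rw [← mul_assoc, ← mul_assoc, Units.inv_mul, one_mul]
      rw [mul_assoc ((u:A) * x ^ n), this, ← mul_assoc, ← mul_assoc]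
  induction p using Polynomial.induction_on' with
  | add p q hp hq => rw [map_add, map_add, hp, hq, mul_add, add_mul]
  | monomial n r =>
    rw [Polynomial.aeval_monomial, Polynomial.aeval_monomial, hpow]
    simp only [← mul_assoc]
    rw [Algebra.commutes]

lemma rank_outer_le_one {F : Type*} [Field F] {m n : Type*} [Fintype m] [Fintype n]
    (W : m → F) (R : n → F) :
    (Matrix.of fun i j => W i * R j : Matrix m n F).rank ≤ 1 := by
  have h : (Matrix.of fun i j => W i * R j : Matrix m n F)
      = Matrix.replicateCol Unit W * Matrix.replicateRow Unit R := by
    ext i j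
    simp [Matrix.mul_apply, Matrix.replicateCol, Matrix.replicateRow]
  rw [h]
  exact le_trans (Matrix.rank_mul_le_left _ _)
    (le_trans (Matrix.rank_le_card_width _) (by simp))

lemma blockDiagonal'AlgHom_apply {R : Type*} {o : Type*} {m' : o → Type*} {α : Type*}
    [CommSemiring R] [Semiring α] [Algebra R α] [Fintype o] [DecidableEq o]
    [∀ i, Fintype (m' i)] [∀ i, DecidableEq (m' i)] (M : ∀ i, Matrix (m' i) (m' i) α) :
    blockDiagonal'AlgHom R m' α M = Matrix.blockDiagonal' M := rfl

theorem stmt_2 {F : Type*} [Field F] [IsAlgClosed F] {n k : ℕ}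
    (A : Matrix (Fin n) (Fin n) F)
    (f : Fin (k + 1) → Polynomial F)
    (hmonic : ∀ i, (f i).Monic)
    (hdeg : ∀ i, 0 < (f i).natDegree)
    (hchain : ∀ i j : Fin (k + 1), i ≤ j → f i ∣ f j)
    (e : (Σ i : Fin (k + 1), Fin (f i).natDegree) ≃ Fin n)
    (Q : Matrix (Fin n) (Fin n) F) (hQ : IsUnit Q.det)
    (hA : A = Q * ((Matrix.blockDiagonal' fun i => companionMatrix (f i)).submatrix
        e.symm e.symm) * Q⁻¹)
    (hmin : minpoly F A = f (Fin.last k))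
    (ψ : Polynomial F)
    (hψdeg : ψ.natDegree + 1 = (f (Fin.last k)).natDegree)
    (hψdvd : ψ ∣ f (Fin.last k))
    (hψmul : ∀ i, i ≠ Fin.last k → f i ∣ ψ) :
    Polynomial.aeval A ψ ≠ 0 ∧
      (Polynomial.aeval A ψ).rank * (f (Fin.last k)).natDegree ≤ n := by
  have hψ0 : ψ ≠ 0 := by
    intro h
    obtain ⟨q, hq⟩ := hψdvd
    exact (hmonic (Fin.last k)).ne_zero (by rw [hq, h, zero_mul])
  constructor
  · -- nonvanishing
    intro h
    have hdvd : minpoly F A ∣ ψ := minpoly.dvd F A h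
    rw [hmin] at hdvd
    have := Polynomial.natDegree_le_of_dvd hdvd hψ0
    omega
  -- rank bound
  -- Step 1: produce the eigenvalue a for the last block
  obtain ⟨q, hq⟩ := hψdvd
  have hq0 : q ≠ 0 := by
    intro h
    exact (hmonic (Fin.last k)).ne_zero (by rw [hq, h, mul_zero])
  have hqdeg : q.natDegree = 1 := by
    have := Polynomial.natDegree_mul hψ0 hq0
    rw [← hq] at this
    omega
  set c : F := q.coeff 1 with hc
  have hcne : c ≠ 0 := by
    have : q.leadingCoeff ≠ 0 := Polynomial.leadingCoeff_ne_zero.mpr hq0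
    rwa [Polynomial.leadingCoeff, hqdeg] at this
  have hqeq : q = Polynomial.C c * X + Polynomial.C (q.coeff 0) :=
    Polynomial.eq_X_add_C_of_natDegree_le_one (le_of_eq hqdeg)
  set a : F := -(c⁻¹ * q.coeff 0) with ha
  have hkey : (X - Polynomial.C a) * ψ = Polynomial.C c⁻¹ * f (Fin.last k) := by
    have hcc : (Polynomial.C c⁻¹) * Polynomial.C c = (1 : Polynomial F) := by
      rw [← Polynomial.C_mul, inv_mul_cancel₀ hcne, Polynomial.C_1]
    rw [hq, hqeq, ha, map_neg, Polynomial.C_mul]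
    linear_combination (-(ψ * X)) * hcc
  -- Step 2: entries of the last block
  set Φ : Polynomial F := f (Fin.last k) with hΦ
  set CΦ := companionMatrix Φ with hCΦ
  set M := aeval CΦ ψ with hM
  have hΦ0 : 0 < Φ.natDegree := hdeg _
  have hrel : M * CΦ = a • M := by
    have hz : aeval CΦ ((X - Polynomial.C a) * ψ) = 0 := by
      rw [hkey, _root_.map_mul, aeval_C,
        aeval_companion_self Φ (hmonic _) hΦ0, mul_zero]
    rw [_root_.map_mul, map_sub, aeval_X, aeval_C, sub_mul] at hz
    have h1 : CΦ * M = a • M := by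
      rw [sub_eq_zero.mp hz, Algebra.smul_def]
    calc M * CΦ = aeval CΦ (ψ * X) := by rw [_root_.map_mul, Polynomial.aeval_X]
      _ = aeval CΦ (X * ψ) := by rw [mul_comm]
      _ = CΦ * M := by rw [_root_.map_mul, Polynomial.aeval_X]
      _ = a • M := h1
  have hlast : ∀ i j, M i j = ψ.coeff i * a ^ (j : ℕ) :=
    aeval_companion_entry Φ hΦ0 ψ (by omega) hrel
  -- Step 3: other blocks vanish
  have hother : ∀ i, i ≠ Fin.last k → aeval (companionMatrix (f i)) ψ = 0 := by
    intro i hi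
    obtain ⟨r, hr⟩ := hψmul i hi
    rw [hr, _root_.map_mul, aeval_companion_self (f i) (hmonic i) (hdeg i), zero_mul]
  -- Step 4: compute aeval on the block diagonal matrix
  set B := Matrix.blockDiagonal' fun i => companionMatrix (f i) with hB
  have haeB : aeval B ψ = Matrix.blockDiagonal' fun i => aeval (companionMatrix (f i)) ψ := by
    have h1 := Polynomial.aeval_algHom_apply
      (blockDiagonal'AlgHom F (fun i : Fin (k+1) => Fin ((f i).natDegree)) F)
      (fun i => companionMatrix (f i)) ψ
    rw [blockDiagonal'AlgHom_apply] at h1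
    have h2 : (aeval (fun i => companionMatrix (f i)) ψ :
        ∀ i : Fin (k+1), Matrix (Fin ((f i).natDegree)) (Fin ((f i).natDegree)) F)
        = fun i => aeval (companionMatrix (f i)) ψ := by
      funext i
      exact (Polynomial.aeval_algHom_apply
        (Pi.evalAlgHom F (fun i : Fin (k+1) => Matrix (Fin ((f i).natDegree))
          (Fin ((f i).natDegree)) F) i) (fun i => companionMatrix (f i)) ψ).symm
    rw [hB, h1, blockDiagonal'AlgHom_apply, h2]
  -- Step 5: it is an outer product
  set W : (Σ i : Fin (k + 1), Fin (f i).natDegree) → F :=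
    fun p => if p.1 = Fin.last k then ψ.coeff (p.2 : ℕ) else 0 with hW
  set Rv : (Σ i : Fin (k + 1), Fin (f i).natDegree) → F :=
    fun p => if p.1 = Fin.last k then a ^ (p.2 : ℕ) else 0 with hRv
  have houter : aeval B ψ = Matrix.of fun p q => W p * Rv q := by
    rw [haeB]
    ext ⟨i, x⟩ ⟨j, y⟩
    show _ = W ⟨i, x⟩ * Rv ⟨j, y⟩
    rcases eq_or_ne i j with rfl | hij
    · rw [Matrix.blockDiagonal'_apply_eq]
      rcases eq_or_ne i (Fin.last k) with rfl | hi
      · rw [hW, hRv]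
        simp only [if_pos rfl]
        exact hlast x y
      · rw [hother i hi, hW, hRv]
        simp [hi]
    · rw [Matrix.blockDiagonal'_apply_ne _ _ _ hij]
      rcases eq_or_ne i (Fin.last k) with rfl | hi
      · rw [hRv]; simp [Ne.symm hij]
      · rw [hW]; simp [hi]
  -- Step 6: reindex
  have hreidx : aeval (B.submatrix e.symm e.symm) ψ
      = (aeval B ψ).submatrix e.symm e.symm := by
    have h1 := Polynomial.aeval_algHom_apply (Matrix.reindexAlgEquiv F F e) B ψ
    simpa using h1
  -- Step 7: conjugation
  haveI := Q.invertibleOfIsUnitDet hQ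
  set u : (Matrix (Fin n) (Fin n) F)ˣ := unitOfInvertible Q with hu
  have hQinv : Q⁻¹ = (↑u⁻¹ : Matrix (Fin n) (Fin n) F) := by
    rw [← Matrix.invOf_eq_nonsing_inv]
    rfl
  have hconj : aeval A ψ = (u : Matrix (Fin n) (Fin n) F)
      * ((aeval B ψ).submatrix e.symm e.symm) * (↑u⁻¹ : Matrix (Fin n) (Fin n) F) := by
    rw [hA, hQinv, ← hreidx]
    exact aeval_unit_conj u _ ψ
  -- Step 8: rank bound
  have hrank1 : (aeval A ψ).rank ≤ 1 := by
    rw [hconj]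
    refine le_trans (Matrix.rank_mul_le_left _ _) ?_
    refine le_trans (Matrix.rank_mul_le_right _ _) ?_
    have : (aeval B ψ).submatrix e.symm e.symm
        = Matrix.of fun i j => W (e.symm i) * Rv (e.symm j) := by
      rw [houter]; rfl
    rw [this]
    exact rank_outer_le_one _ _
  have hdegn : Φ.natDegree ≤ n := by
    have hcard : ∑ i, (f i).natDegree = n := by
      have := Fintype.card_congr e
      simpa [Fintype.card_sigma] using this
    calc Φ.natDegree ≤ ∑ i, (f i).natDegree :=
          Finset.single_le_sum (f := fun i => (f i).natDegree)
            (fun i _ => Nat.zero_le _) (Finset.mem_univ (Fin.last k))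
      _ = n := hcard
  calc (aeval A ψ).rank * Φ.natDegree ≤ 1 * Φ.natDegree :=
        Nat.mul_le_mul_right _ hrank1
    _ = Φ.natDegree := one_mul _
    _ ≤ n := hdegn
end

section
/- Let S be an irreducible subset of Mat_n(F) over an algebraically closed field F (i.e., S generates Mat_n(F) as an F-algebra), with n ≥ 2. Then there exist positive integers λ and ρ with λ·ρ ≤ 2n such that the F-linear span of words in S of length at most λ contains a nonzero square-zero matrix of rank ρ. -/
open Polynomial Matrix Submodule
open scoped Pointwise

section Words

variable {F : Type*} [Field F] {m : Type*} [Fintype m] [DecidableEq m]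
variable {S : Set (Matrix m m F)}

lemma wordsLe_mono {j k : ℕ} (h : j ≤ k) : wordsLe S j ⊆ wordsLe S k := by
  rintro M ⟨l, hl, hmem, rfl⟩
  exact ⟨l, hl.trans h, hmem, rfl⟩

lemma one_mem_wordsLe (k : ℕ) : (1 : Matrix m m F) ∈ wordsLe S k :=
  ⟨[], by simp⟩

lemma mem_wordsLe_of_mem {A : Matrix m m F} (hA : A ∈ S) : A ∈ wordsLe S 1 :=
  ⟨[A], by simp [hA]⟩

lemma pow_mem_wordsLe {A : Matrix m m F} (hA : A ∈ S) (k : ℕ) : A ^ k ∈ wordsLe S k :=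
  ⟨List.replicate k A, le_of_eq List.length_replicate,
    fun a ha => (List.eq_of_mem_replicate ha) ▸ hA, (List.prod_replicate k A).symm⟩

lemma wordsLe_mul_subset (j k : ℕ) :
    wordsLe S j * wordsLe S k ⊆ wordsLe S (j + k) := by
  rintro x ⟨a, ha, b, hb, rfl⟩
  obtain ⟨l₁, hl₁, hm₁, rfl⟩ := ha
  obtain ⟨l₂, hl₂, hm₂, rfl⟩ := hb
  refine ⟨l₁ ++ l₂, ?_, ?_, ?_⟩
  · simpa using Nat.add_le_add hl₁ hl₂
  · intro a ha; rcases List.mem_append.mp ha with h | h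
    · exact hm₁ a h
    · exact hm₂ a h
  · simp

lemma mul_mem_span_wordsLe {x y : Matrix m m F} {j k : ℕ}
    (hx : x ∈ Submodule.span F (wordsLe S j)) (hy : y ∈ Submodule.span F (wordsLe S k)) :
    x * y ∈ Submodule.span F (wordsLe S (j + k)) := by
  have h := Submodule.mul_mem_mul hx hy
  rw [Submodule.span_mul_span] at h
  exact Submodule.span_mono (wordsLe_mul_subset j k) h

lemma aeval_mem_span_wordsLe {A : Matrix m m F} (hA : A ∈ S) {q : F[X]} {d : ℕ}
    (hq : q.natDegree ≤ d) :
    (aeval A) q ∈ Submodule.span F (wordsLe S d) := by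
  rw [Polynomial.aeval_eq_sum_range]
  refine Submodule.sum_mem _ fun i hi => Submodule.smul_mem _ _ (Submodule.subset_span ?_)
  have hik : i ≤ d := by
    have := Finset.mem_range.mp hi
    omega
  exact wordsLe_mono hik (pow_mem_wordsLe hA i)

end Words

section AuxLemmas
variable {F : Type*} [Field F] {m : Type*} [Fintype m] [DecidableEq m]

lemma matrix_eq_zero_of_mulVec {A : Matrix m m F} (h : ∀ w, A *ᵥ w = 0) : A = 0 := by
  ext i j
  have h3 := congrFun (h (Pi.single j 1)) i
  simpa [Matrix.mulVec_single_one] using h3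

lemma pow_mulVec_eig {X : Matrix m m F} {v : m → F} {b : F} (hv : X *ᵥ v = b • v) (k : ℕ) :
    X ^ k *ᵥ v = b ^ k • v := by
  induction k with
  | zero => simp
  | succ k ih =>
    have : X ^ (k + 1) = X ^ k * X := by rw [pow_succ]
    rw [this, ← Matrix.mulVec_mulVec, hv, Matrix.mulVec_smul, ih, smul_smul, pow_succ,
      mul_comm]

lemma aeval_mulVec_eig {X : Matrix m m F} {v : m → F} {b : F} (hv : X *ᵥ v = b • v) (q : F[X]) :
    (aeval X q) *ᵥ v = q.eval b • v := by
  induction q using Polynomial.induction_on' with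
  | add p q hp hq => rw [map_add, Matrix.add_mulVec, hp, hq, Polynomial.eval_add, add_smul]
  | monomial k c =>
    rw [Polynomial.aeval_monomial, Polynomial.eval_monomial]
    rw [Algebra.algebraMap_eq_smul_one, smul_mul_assoc, one_mul, Matrix.smul_mulVec,
      pow_mulVec_eig hv, smul_smul]



lemma rank_def' (A : Matrix m m F) : A.rank = Module.finrank F (LinearMap.range A.mulVecLin) := rfl

lemma ne_zero_of_rank_pos {A : Matrix m m F} (hA : A ≠ 0) : 0 < A.rank := by
  rcases Nat.eq_zero_or_pos A.rank with h | h
  · exfalso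
    rw [rank_def'] at h
    have hbot : LinearMap.range A.mulVecLin = ⊥ := Submodule.finrank_eq_zero.mp h
    have hzero : A.mulVecLin = 0 := LinearMap.range_eq_bot.mp hbot
    apply hA
    ext i j
    have := congrFun (congrArg (fun f => f.toFun) hzero) (Pi.single j 1)
    have h2 : A *ᵥ Pi.single j 1 = 0 := this
    have h3 := congrFun h2 i
    simpa [Matrix.mulVec_single_one] using h3
  · exact h

lemma rank_step {G Y Z : Matrix m m F} (h1 : Z * Y = 0) (h2 : ∃ W : Matrix m m F, Y = G * W) :
    (Z * G).rank + Y.rank ≤ G.rank := by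
  classical
  set RG := LinearMap.range G.mulVecLin with hRG
  set f : RG →ₗ[F] (m → F) := Z.mulVecLin.domRestrict RG with hf
  have hsum := LinearMap.finrank_range_add_finrank_ker f
  have hr : LinearMap.range f = LinearMap.range (Z * G).mulVecLin := by
    rw [Matrix.mulVecLin_mul, LinearMap.range_comp, hf, LinearMap.range_domRestrict]
  have hYG : LinearMap.range Y.mulVecLin ≤ RG := by
    obtain ⟨W, rfl⟩ := h2
    rw [Matrix.mulVecLin_mul, LinearMap.range_comp, hRG]
    exact LinearMap.map_le_range
  have hZY : ∀ v ∈ LinearMap.range Y.mulVecLin, Z.mulVecLin v = 0 := by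
    rintro v ⟨w, rfl⟩
    have h3 : Z.mulVecLin (Y.mulVecLin w) = (Z * Y).mulVecLin w := by
      rw [Matrix.mulVecLin_mul]; rfl
    rw [h3, h1]; simp
  set g : LinearMap.range Y.mulVecLin →ₗ[F] LinearMap.ker f :=
    LinearMap.codRestrict (LinearMap.ker f) (Submodule.inclusion hYG)
      (fun x => by
        simp only [LinearMap.mem_ker, hf, LinearMap.domRestrict_apply]
        exact hZY x.1 x.2) with hg
  have hginj : Function.Injective g := by
    intro a b hab
    have : (Submodule.inclusion hYG) a = (Submodule.inclusion hYG) b := by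
      have := congrArg Subtype.val hab
      exact Subtype.ext (congrArg Subtype.val this)
    exact Submodule.inclusion_injective hYG this
  have hY : Y.rank ≤ Module.finrank F (LinearMap.ker f) := by
    rw [rank_def']
    exact LinearMap.finrank_le_finrank_of_injective hginj
  have hZG : (Z * G).rank = Module.finrank F (LinearMap.range f) := by
    rw [rank_def', hr]
  have hG : G.rank = Module.finrank F RG := rfl
  omega


lemma sum_rank_le_card (X : Matrix m m F) {p : F[X]} (hann : aeval X p = 0) :
    ∀ R : Multiset F, R ≤ p.roots →
      (R.map (fun b => ((aeval X) (p /ₘ (Polynomial.X - C b))).rank)).sum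
        + ((aeval X) ((R.map (fun b => Polynomial.X - C b)).prod)).rank ≤ Fintype.card m := by
  intro R
  induction R using Multiset.induction_on with
  | empty => intro _; simpa using Matrix.rank_le_card_width (1 : Matrix m m F)
  | cons b s ih =>
    intro hle
    have hs : s ≤ p.roots := le_trans (Multiset.le_cons_self s b) hle
    have hb : b ∈ p.roots := Multiset.mem_of_le hle (Multiset.mem_cons_self b s)
    have hbroot : p.IsRoot b := Polynomial.isRoot_of_mem_roots hb
    have hfac : (Polynomial.X - C b) * (p /ₘ (Polynomial.X - C b)) = p :=
      Polynomial.mul_divByMonic_eq_iff_isRoot.mpr hbroot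
    have hdvd1 : (Polynomial.X - C b) * (s.map (fun c => Polynomial.X - C c)).prod ∣ p := by
      have h1 : ((b ::ₘ s).map (fun c => Polynomial.X - C c)).prod ∣
          (p.roots.map (fun c => Polynomial.X - C c)).prod :=
        Multiset.prod_dvd_prod_of_le (Multiset.map_le_map hle)
      have h2 := Polynomial.prod_multiset_X_sub_C_dvd p
      simpa [Multiset.map_cons, Multiset.prod_cons] using h1.trans h2
    have hgh : (s.map (fun c => Polynomial.X - C c)).prod ∣ (p /ₘ (Polynomial.X - C b)) := by
      have hx : (Polynomial.X - C b) ≠ 0 := Polynomial.X_sub_C_ne_zero b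
      rw [← hfac] at hdvd1
      exact (mul_dvd_mul_iff_left hx).mp hdvd1
    obtain ⟨w, hw⟩ := hgh
    have hstep := rank_step (G := aeval X ((s.map (fun c => Polynomial.X - C c)).prod))
      (Y := aeval X (p /ₘ (Polynomial.X - C b)))
      (Z := aeval X (Polynomial.X - C b))
      (by rw [← _root_.map_mul, hfac, hann]) ⟨aeval X w, by rw [← _root_.map_mul, ← hw]⟩
    have hih := ih hs
    simp only [Multiset.map_cons, Multiset.sum_cons, Multiset.prod_cons, _root_.map_mul] at hih hstep ⊢
    omega


end AuxLemmas

theorem stmt_3 {F : Type*} [Field F] [IsAlgClosed F] {n : ℕ} (hn : 2 ≤ n)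
    (S : Set (Matrix (Fin n) (Fin n) F))
    (hirr : Algebra.adjoin F S = (⊤ : Subalgebra F (Matrix (Fin n) (Fin n) F))) :
    ∃ lam rho : ℕ, 0 < lam ∧ 0 < rho ∧ lam * rho ≤ 2 * n ∧
      ∃ H ∈ Submodule.span F (wordsLe S lam),
        H ≠ 0 ∧ H * H = 0 ∧ H.rank = rho := by
  classical
  haveI : NeZero n := ⟨by omega⟩
  -- Step A: there is a nonscalar element of S
  have hA : ∃ A ∈ S, ∀ c : F, A ≠ c • (1 : Matrix (Fin n) (Fin n) F) := by
    by_contra hcon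
    push_neg at hcon
    have hle : Algebra.adjoin F S ≤ (⊥ : Subalgebra F (Matrix (Fin n) (Fin n) F)) := by
      rw [Algebra.adjoin_le_iff]
      intro A hAS
      obtain ⟨c, hc⟩ := hcon A hAS
      refine Algebra.mem_bot.mpr ⟨c, ?_⟩
      rw [Algebra.algebraMap_eq_smul_one, hc]
    set i0 : Fin n := ⟨0, by omega⟩
    set i1 : Fin n := ⟨1, by omega⟩
    have hi01 : i0 ≠ i1 := by simp [i0, i1, Fin.ext_iff]
    have hE : (Matrix.single i0 i1 (1 : F)) ∈ (⊥ : Subalgebra F _) := by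
      apply hle
      rw [hirr]
      trivial
    obtain ⟨c, hc⟩ := Algebra.mem_bot.mp hE
    have h1 := congrFun (congrFun hc i0) i1
    rw [Algebra.algebraMap_eq_smul_one] at h1
    simp [Matrix.smul_apply, Matrix.one_apply_ne hi01, Matrix.single,
      hi01] at h1
  obtain ⟨X, hXS, hXns⟩ := hA
  have hint : IsIntegral F X := IsIntegral.of_finite F X
  set p := minpoly F X with hp
  have hmon : p.Monic := minpoly.monic hint
  have hp0 : p ≠ 0 := hmon.ne_zero
  have hann : aeval X p = 0 := minpoly.aeval F X
  set D := p.natDegree with hD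
  have hD1 : 1 ≤ D := minpoly.natDegree_pos hint
  have hD2 : 2 ≤ D := by
    rcases Nat.lt_or_ge D 2 with h | h
    · exfalso
      have hDeq : D = 1 := by omega
      have hpeq := Polynomial.eq_X_add_C_of_natDegree_le_one (le_of_eq hDeq)
      have hc1 : p.coeff 1 = 1 := by
        have hmc := hmon.coeff_natDegree
        rwa [← hD, hDeq] at hmc
      rw [hc1, _root_.map_one, one_mul] at hpeq
      have h0 := hann
      rw [hpeq] at h0
      simp only [map_add, aeval_X, aeval_C] at h0
      rw [Algebra.algebraMap_eq_smul_one] at h0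
      have hXc : X = (-(p.coeff 0)) • (1 : Matrix (Fin n) (Fin n) F) := by
        have := eq_neg_of_add_eq_zero_left h0
        rw [this, neg_smul]
      exact hXns _ hXc
    · exact h
  -- roots
  have hsplit : Multiset.card p.roots = D :=
    (Polynomial.splits_iff_card_roots).mp (IsAlgClosed.splits p)
  have hroots_ne : p.roots ≠ 0 := by
    intro h0
    rw [h0] at hsplit
    simp at hsplit
    omega
  -- the key sum inequality
  have hsum : (p.roots.map (fun b => ((aeval X) (p /ₘ (Polynomial.X - C b))).rank)).sum ≤ n := by
    have := sum_rank_le_card X hann p.roots le_rfl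
    rw [Fintype.card_fin] at this
    omega
  -- choose a root with minimal rank
  obtain ⟨b₀, hb₀fin, hb₀min⟩ := Finset.exists_min_image p.roots.toFinset
    (fun b => ((aeval X) (p /ₘ (Polynomial.X - C b))).rank)
    (by rwa [Multiset.toFinset_nonempty])
  have hb₀ : b₀ ∈ p.roots := Multiset.mem_toFinset.mp hb₀fin
  set Y := (aeval X) (p /ₘ (Polynomial.X - C b₀)) with hYdef
  have hmin : D * Y.rank ≤ n := by
    have hall : ∀ x ∈ p.roots.map (fun b => ((aeval X) (p /ₘ (Polynomial.X - C b))).rank),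
        Y.rank ≤ x := by
      intro x hx
      obtain ⟨b, hbmem, rfl⟩ := Multiset.mem_map.mp hx
      exact hb₀min b (Multiset.mem_toFinset.mpr hbmem)
    have := Multiset.card_nsmul_le_sum hall
    rw [Multiset.card_map, hsplit, smul_eq_mul] at this
    omega
  -- facts about the cofactor
  have hbroot : p.IsRoot b₀ := Polynomial.isRoot_of_mem_roots hb₀
  have hfac : (Polynomial.X - C b₀) * (p /ₘ (Polynomial.X - C b₀)) = p :=
    Polynomial.mul_divByMonic_eq_iff_isRoot.mpr hbroot
  have hx0 : (Polynomial.X - C b₀) ≠ (0 : F[X]) := Polynomial.X_sub_C_ne_zero b₀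
  have hh0 : p /ₘ (Polynomial.X - C b₀) ≠ 0 := by
    intro h0
    rw [h0, mul_zero] at hfac
    exact hp0 hfac.symm
  have hdegh : (p /ₘ (Polynomial.X - C b₀)).natDegree = D - 1 := by
    have := Polynomial.natDegree_mul hx0 hh0
    rw [hfac, Polynomial.natDegree_X_sub_C] at this
    omega
  have hY0 : Y ≠ 0 := by
    intro h0
    have hdvd := minpoly.dvd F X (p := p /ₘ (Polynomial.X - C b₀)) (by rw [← hYdef]; exact h0)
    have := Polynomial.natDegree_le_of_dvd hdvd hh0
    rw [← hp, ← hD, hdegh] at this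
    omega
  have hYrank : 0 < Y.rank := ne_zero_of_rank_pos hY0
  have hYmem : Y ∈ Submodule.span F (wordsLe S (D - 1)) :=
    aeval_mem_span_wordsLe hXS (le_of_eq hdegh)
  -- multiplicity of b₀
  have hrm : rootMultiplicity b₀ p = 1 + rootMultiplicity b₀ (p /ₘ (Polynomial.X - C b₀)) := by
    conv_lhs => rw [← hfac]
    rw [Polynomial.rootMultiplicity_mul (by rw [hfac]; exact hp0),
      Polynomial.rootMultiplicity_X_sub_C_self]
  have hrmpos : 1 ≤ rootMultiplicity b₀ p := by
    rw [← Polynomial.count_roots]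
    exact Multiset.one_le_count_iff_mem.mpr hb₀
  rcases Nat.lt_or_ge (rootMultiplicity b₀ p) 2 with hm1 | hm2
  · -- SANDWICH case: multiplicity 1
    have hrmh0 : rootMultiplicity b₀ (p /ₘ (Polynomial.X - C b₀)) = 0 := by omega
    have hnroot : ¬ (p /ₘ (Polynomial.X - C b₀)).IsRoot b₀ := by
      intro hr
      exact hh0 (Polynomial.rootMultiplicity_eq_zero_iff.mp hrmh0 hr)
    have heval : (p /ₘ (Polynomial.X - C b₀)).eval b₀ ≠ 0 := hnroot
    set Z : Matrix (Fin n) (Fin n) F := X - b₀ • 1 with hZdef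
    have hZeval : (aeval X) (Polynomial.X - C b₀) = Z := by
      rw [map_sub, aeval_X, aeval_C, Algebra.algebraMap_eq_smul_one]
    have hZ0 : Z ≠ 0 := by
      intro h0
      exact hXns b₀ (by rwa [sub_eq_zero] at h0)
    have hZY : Z * Y = 0 := by
      rw [← hZeval, hYdef, ← _root_.map_mul, hfac, hann]
    have hYZ : Y * Z = 0 := by
      rw [← hZeval, hYdef, ← _root_.map_mul, mul_comm, hfac, hann]
    -- rank identities
    have e1 : Y.rank + Module.finrank F (LinearMap.ker Y.mulVecLin) = n := by
      have := LinearMap.finrank_range_add_finrank_ker Y.mulVecLin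
      rwa [Module.finrank_pi, Fintype.card_fin] at this
    have e2 : Z.rank + Module.finrank F (LinearMap.ker Z.mulVecLin) = n := by
      have := LinearMap.finrank_range_add_finrank_ker Z.mulVecLin
      rwa [Module.finrank_pi, Fintype.card_fin] at this
    have h1 : LinearMap.range Z.mulVecLin ≤ LinearMap.ker Y.mulVecLin := by
      rintro v ⟨w, rfl⟩
      simp only [LinearMap.mem_ker, mulVecLin_apply, Matrix.mulVec_mulVec, hYZ,
        Matrix.zero_mulVec]
    have e3 : LinearMap.ker Z.mulVecLin ⊓ LinearMap.ker Y.mulVecLin = ⊥ := by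
      rw [Submodule.eq_bot_iff]
      intro v hv
      rw [Submodule.mem_inf, LinearMap.mem_ker, LinearMap.mem_ker] at hv
      obtain ⟨hv1, hv2⟩ := hv
      replace hv1 : Z *ᵥ v = 0 := hv1
      replace hv2 : Y *ᵥ v = 0 := hv2
      have hXv : X *ᵥ v = b₀ • v := by
        have : (X - b₀ • 1) *ᵥ v = 0 := hv1
        rw [Matrix.sub_mulVec, sub_eq_zero] at this
        rw [this, Matrix.smul_mulVec, Matrix.one_mulVec]
      have := aeval_mulVec_eig hXv (p /ₘ (Polynomial.X - C b₀))
      rw [← hYdef, hv2] at this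
      have := (smul_eq_zero.mp this.symm).resolve_left heval
      exact this
    have e4 : Module.finrank F (LinearMap.ker Z.mulVecLin)
        + Module.finrank F (LinearMap.ker Y.mulVecLin) ≤ n := by
      have h5 := Submodule.finrank_sup_add_finrank_inf_eq
        (LinearMap.ker Z.mulVecLin) (LinearMap.ker Y.mulVecLin)
      rw [e3] at h5
      have h6 : Module.finrank F
          ((LinearMap.ker Z.mulVecLin) ⊔ (LinearMap.ker Y.mulVecLin) :
            Submodule F (Fin n → F)) ≤ n := by
        have := Submodule.finrank_le
          ((LinearMap.ker Z.mulVecLin) ⊔ (LinearMap.ker Y.mulVecLin) :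
            Submodule F (Fin n → F))
        rwa [Module.finrank_pi, Fintype.card_fin] at this
      simp only [finrank_bot] at h5
      omega
    have e5 : Z.rank ≤ Module.finrank F (LinearMap.ker Y.mulVecLin) := by
      rw [rank_def']
      exact Submodule.finrank_mono h1
    -- transport: there is C in the span of words of length ≤ 1 with Y*C*Z ≠ 0
    have hex : ∃ C ∈ Submodule.span F (wordsLe S 1), Y * C * Z ≠ 0 := by
      by_contra hcon2
      push_neg at hcon2
      have hUeq : LinearMap.range Z.mulVecLin = LinearMap.ker Y.mulVecLin :=
        Submodule.eq_of_le_of_finrank_eq h1 (by rw [← rank_def']; omega)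
      have hinv : ∀ M ∈ Algebra.adjoin F S, ∀ u ∈ LinearMap.range Z.mulVecLin,
          M *ᵥ u ∈ LinearMap.range Z.mulVecLin := by
        intro M hM
        induction hM using Algebra.adjoin_induction with
        | mem A hA =>
          intro u hu
          obtain ⟨w, rfl⟩ := hu
          rw [hUeq]
          simp only [LinearMap.mem_ker, mulVecLin_apply, Matrix.mulVec_mulVec]
          have h7 : Y * (A * Z) = 0 := by
            have h5 := hcon2 A (Submodule.subset_span (mem_wordsLe_of_mem hA))
            rw [← mul_assoc]
            exact h5
          rw [h7, Matrix.zero_mulVec]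
        | algebraMap r =>
          intro u hu
          rw [Algebra.algebraMap_eq_smul_one, Matrix.smul_mulVec, Matrix.one_mulVec]
          exact Submodule.smul_mem _ _ hu
        | add x y hx hy ihx ihy =>
          intro u hu
          rw [Matrix.add_mulVec]
          exact Submodule.add_mem _ (ihx u hu) (ihy u hu)
        | mul x y hx hy ihx ihy =>
          intro u hu
          rw [← Matrix.mulVec_mulVec]
          exact ihx _ (ihy u hu)
      obtain ⟨w0, hw0⟩ : ∃ w, Z *ᵥ w ≠ 0 := by
        by_contra hz
        push_neg at hz
        exact hZ0 (matrix_eq_zero_of_mulVec hz)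
      obtain ⟨j, hj⟩ : ∃ j, (Z *ᵥ w0) j ≠ 0 := by
        by_contra hz
        push_neg at hz
        exact hw0 (funext hz)
      have hall : ∀ v : Fin n → F, v ∈ LinearMap.range Z.mulVecLin := by
        intro v
        obtain ⟨u₀, hu₀mem, hu₀j⟩ : ∃ u, u ∈ LinearMap.range Z.mulVecLin ∧ u j ≠ 0 :=
          ⟨Z *ᵥ w0, ⟨w0, rfl⟩, hj⟩
        set M : Matrix (Fin n) (Fin n) F :=
          Matrix.of (fun i k => if k = j then v i * (u₀ j)⁻¹ else 0) with hMdef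
        have hMmem : M ∈ Algebra.adjoin F S := by rw [hirr]; trivial
        have h8 := hinv M hMmem u₀ hu₀mem
        have h9 : M *ᵥ u₀ = v := by
          funext i
          simp only [hMdef, Matrix.mulVec, dotProduct, Matrix.of_apply, ite_mul,
            zero_mul]
          rw [Finset.sum_ite_eq' Finset.univ j (fun k => v i * (u₀ j)⁻¹ * u₀ k)]
          simp [mul_assoc, inv_mul_cancel₀ hu₀j]
        rw [h9] at h8
        exact h8
      have hKtop : LinearMap.ker Y.mulVecLin = ⊤ := by
        rw [← hUeq]
        exact Submodule.eq_top_iff'.mpr hall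
      apply hY0
      apply matrix_eq_zero_of_mulVec
      intro w
      have : (w : Fin n → F) ∈ LinearMap.ker Y.mulVecLin := by rw [hKtop]; trivial
      simpa using this
    obtain ⟨C₀, hC₀mem, hC₀⟩ := hex
    have hHmem : Y * C₀ * Z ∈ Submodule.span F (wordsLe S (D + 1)) := by
      have h6 : Y * C₀ ∈ Submodule.span F (wordsLe S ((D - 1) + 1)) :=
        mul_mem_span_wordsLe hYmem hC₀mem
      have h7 : Z ∈ Submodule.span F (wordsLe S 1) := by
        apply Submodule.sub_mem
        · exact Submodule.subset_span (mem_wordsLe_of_mem hXS)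
        · exact Submodule.smul_mem _ _ (Submodule.subset_span (one_mem_wordsLe 1))
      have h8 := mul_mem_span_wordsLe h6 h7
      have h9 : (D - 1) + 1 + 1 = D + 1 := by omega
      rwa [h9] at h8
    have hHH : (Y * C₀ * Z) * (Y * C₀ * Z) = 0 := by
      have h10 : (Y * C₀ * Z) * (Y * C₀ * Z) = Y * C₀ * (Z * Y) * (C₀ * Z) := by
        simp only [mul_assoc]
      rw [h10, hZY, mul_zero, zero_mul]
    have hHrank : (Y * C₀ * Z).rank ≤ Y.rank := by
      rw [mul_assoc]
      exact Matrix.rank_mul_le_left Y (C₀ * Z)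
    have hHrank_n : (Y * C₀ * Z).rank ≤ n := by
      have := Matrix.rank_le_card_width (Y * C₀ * Z)
      rwa [Fintype.card_fin] at this
    refine ⟨D + 1, (Y * C₀ * Z).rank, by omega, ne_zero_of_rank_pos hC₀, ?_,
      Y * C₀ * Z, hHmem, hC₀, hHH, rfl⟩
    have hb : D * (Y * C₀ * Z).rank ≤ D * Y.rank := Nat.mul_le_mul_left D hHrank
    have hexp : (D + 1) * (Y * C₀ * Z).rank = D * (Y * C₀ * Z).rank + (Y * C₀ * Z).rank := by
      ring
    omega
  · -- DIRECT case: multiplicity ≥ 2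
    have hrooth : (p /ₘ (Polynomial.X - C b₀)).IsRoot b₀ := by
      have hposm : 0 < rootMultiplicity b₀ (p /ₘ (Polynomial.X - C b₀)) := by omega
      exact (Polynomial.rootMultiplicity_pos hh0).mp hposm
    obtain ⟨u, hu⟩ := Polynomial.dvd_iff_isRoot.mpr hrooth
    have hHH : Y * Y = 0 := by
      rw [hYdef, ← _root_.map_mul]
      have : (p /ₘ (Polynomial.X - C b₀)) * (p /ₘ (Polynomial.X - C b₀)) = p * u := by
        calc (p /ₘ (Polynomial.X - C b₀)) * (p /ₘ (Polynomial.X - C b₀))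
            = ((Polynomial.X - C b₀) * u) * (p /ₘ (Polynomial.X - C b₀)) := by
              nth_rewrite 1 [hu]; rfl
          _ = ((Polynomial.X - C b₀) * (p /ₘ (Polynomial.X - C b₀))) * u := by ring
          _ = p * u := by rw [hfac]
      rw [this, _root_.map_mul, hann, zero_mul]
    refine ⟨D - 1, Y.rank, by omega, hYrank, ?_, Y, hYmem, hY0, hHH, rfl⟩
    calc (D - 1) * Y.rank ≤ D * Y.rank := Nat.mul_le_mul_right _ (by omega)
      _ ≤ n := hmin
      _ ≤ 2 * n := by omega
end

section
/- Let A be an n×n matrix over an algebraically closed field F and r a natural number. Assume that rank(P·A·Q) ≤ r for all matrices P ∈ F^{p×n} and Q ∈ F^{n×q} (for all p, q) satisfying P·Q = 0. Then there exists μ ∈ F such that rank(A − μ·I) ≤ 2r. -/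
open Module Submodule LinearMap Set

section dev

universe u

variable {F : Type u} [Field F] [IsAlgClosed F]

section general
variable {M M₂ : Type u} [AddCommGroup M] [Module F M] [AddCommGroup M₂] [Module F M₂]

lemma finrank_map_add_inf_ker [FiniteDimensional F M] (π : M →ₗ[F] M₂) (S : Submodule F M) :
    finrank F (S.map π) + finrank F ↥(S ⊓ ker π) = finrank F S := by
  have h := LinearMap.finrank_range_add_finrank_ker (π ∘ₗ S.subtype)
  rw [LinearMap.range_comp, Submodule.range_subtype, LinearMap.ker_comp] at h
  have e : finrank F ↥(comap S.subtype (ker π)) = finrank F ↥(S ⊓ ker π) := by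
    rw [← Submodule.map_comap_subtype]
    exact (Submodule.equivMapOfInjective S.subtype S.injective_subtype
      (comap S.subtype (ker π))).finrank_eq
  rw [e] at h
  exact h
end general

section key
variable {M : Type u} [AddCommGroup M] [Module F M] [FiniteDimensional F M]

lemma exists_good (f : Module.End F M) (hf : ∀ c : F, f ≠ c • 1) :
    ∃ (x : M) (a b : F), f x ∉ span F {x} ∧ f (f x) = a • f x + b • x := by
  have hnt : Nontrivial M := by
    by_contra hs
    rw [not_nontrivial_iff_subsingleton] at hs
    exact hf 0 (LinearMap.ext fun x => Subsingleton.elim _ _)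
  obtain ⟨α, hα⟩ := f.exists_eigenvalue
  set K := f.eigenspace α with hK
  have hKtop : K ≠ ⊤ := by
    intro htop
    apply hf α
    ext x
    have hx : x ∈ K := htop ▸ Submodule.mem_top
    rw [Module.End.mem_eigenspace_iff] at hx
    simpa using hx
  have hKinv : K ≤ K.comap f := by
    intro x hx
    rw [Module.End.mem_eigenspace_iff] at hx
    simp only [Submodule.mem_comap]
    rw [Module.End.mem_eigenspace_iff, hx, map_smul, hx]
  have hntq : Nontrivial (M ⧸ K) :=
    (Submodule.Quotient.nontrivial_iff (p := K)).mpr hKtop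
  obtain ⟨β, hβ⟩ := Module.End.exists_eigenvalue (Submodule.mapQ K K f hKinv : Module.End F (M ⧸ K))
  obtain ⟨ubar, hub⟩ := hβ.exists_hasEigenvector
  obtain ⟨u, rfl⟩ := K.mkQ_surjective ubar
  have huK : u ∉ K := by
    intro h
    exact hub.2 ((Submodule.Quotient.mk_eq_zero K).mpr h)
  have hk : f u - β • u ∈ K := by
    rw [← Submodule.Quotient.mk_eq_zero K, ← Submodule.mkQ_apply]
    have h3 : K.mkQ (f u) = β • K.mkQ u := by
      have h4 := hub.apply_eq_smul
      simp only [Submodule.mkQ_apply] at h4 ⊢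
      rw [Submodule.mapQ_apply] at h4
      exact h4
    rw [map_sub, map_smul, h3, sub_self]
  set k := f u - β • u with hkdef
  have hfu : f u = β • u + k := by rw [hkdef]; abel
  by_cases hk0 : k = 0
  · -- f u = β • u, β ≠ α
    have hfu' : f u = β • u := by rw [hfu, hk0, add_zero]
    have hβα : β ≠ α := by
      intro h
      exact huK (Module.End.mem_eigenspace_iff.mpr (by rw [hfu', h]))
    obtain ⟨w, hwK, hw0⟩ := Submodule.exists_mem_ne_zero_of_ne_bot hα
    have hfw : f w = α • w := Module.End.mem_eigenspace_iff.mp hwK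
    refine ⟨u + w, α + β, -(α * β), ?_, ?_⟩
    · intro hmem
      rw [Submodule.mem_span_singleton] at hmem
      obtain ⟨c, hc⟩ := hmem
      rw [map_add, hfu', hfw] at hc
      have hc' : (c - β) • u = (α - c) • w := by
        have h0 : c • (u + w) - (β • u + α • w) = 0 := sub_eq_zero.mpr hc
        have h1 : (c - β) • u - (α - c) • w = c • (u + w) - (β • u + α • w) := by module
        exact sub_eq_zero.mp (h1.trans h0)
      by_cases hcβ : c = β
      · rw [hcβ, sub_self, zero_smul] at hc'
        rcases smul_eq_zero.mp hc'.symm with h1 | h1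
        · exact hβα (sub_eq_zero.mp h1).symm
        · exact hw0 h1
      · apply huK
        have : u = (c - β)⁻¹ • ((α - c) • w) := by
          rw [← hc', smul_smul, inv_mul_cancel₀ (sub_ne_zero.mpr hcβ), one_smul]
        rw [this]
        exact K.smul_mem _ (K.smul_mem _ hwK)
    · rw [map_add, hfu', hfw, map_add, map_smul, map_smul, hfu', hfw]
      module
  · have hfk : f k = α • k := Module.End.mem_eigenspace_iff.mp hk
    refine ⟨u, α + β, -(α * β), ?_, ?_⟩
    · intro hmem
      rw [Submodule.mem_span_singleton] at hmem
      obtain ⟨c, hc⟩ := hmem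
      have hku : k = (c - β) • u := by rw [hkdef, ← hc]; module
      have hcβ : c - β ≠ 0 := by
        intro h
        exact hk0 (by rw [hku, h, zero_smul])
      apply huK
      have : u = (c - β)⁻¹ • k := by
        rw [hku, smul_smul, inv_mul_cancel₀ hcβ, one_smul]
      rw [this]
      exact K.smul_mem _ hk
    · rw [hfu, map_add, map_smul, hfu, hfk]
      module
end key

theorem core (N : ℕ) : ∀ {M : Type u} [AddCommGroup M] [Module F M] [FiniteDimensional F M],
    finrank F M ≤ N → ∀ (f : Module.End F M) (r : ℕ),
    (∀ V : Submodule F M, finrank F ↥(V ⊔ V.map f) ≤ finrank F ↥V + r) →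
    ∃ μ : F, finrank F ↥(LinearMap.range (f - μ • 1)) ≤ 2 * r := by
  induction N using Nat.strong_induction_on with
  | _ N IH =>
  intro M _ _ _ hN f r hyp
  by_cases hsc : ∃ c : F, f = c • 1
  · obtain ⟨c, rfl⟩ := hsc
    refine ⟨c, ?_⟩
    rw [sub_self, LinearMap.range_zero, finrank_bot]
    exact Nat.zero_le _
  · push_neg at hsc
    obtain ⟨x, a, b, hxs, hff⟩ := exists_good f hsc
    have hx0 : x ≠ 0 := by rintro rfl; exact hxs (by rw [map_zero]; exact zero_mem _)
    set W : Submodule F M := span F {x, f x} with hWdef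
    have hxW : x ∈ W := subset_span (by simp)
    have hfxW : f x ∈ W := subset_span (by simp)
    have hli : LinearIndependent F ![f x, x] := by
      rw [linearIndependent_fin2]
      simp only [Matrix.cons_val_one, Matrix.head_cons, Matrix.cons_val_zero]
      refine ⟨hx0, fun c hc => hxs ?_⟩
      rw [← hc]
      exact smul_mem _ _ (mem_span_singleton_self x)
    have hW2 : finrank F W = 2 := by
      have hr : ({x, f x} : Set M) = Set.range ![f x, x] := by
        simp [Set.pair_comm]
      rw [hWdef, hr, finrank_span_eq_card hli]
      simp
    have hWinv : W.map f ≤ W := by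
      rw [hWdef, Submodule.map_span, span_le]
      rintro _ ⟨y, hy, rfl⟩
      rcases hy with rfl | rfl
      · exact hfxW
      · simp only [SetLike.mem_coe]
        rw [hff]
        exact add_mem (smul_mem _ _ hfxW) (smul_mem _ _ hxW)
    have hr1 : 1 ≤ r := by
      have h1 := hyp (span F {x})
      have h2 : span F {x} ⊔ (span F {x}).map f = W := by
        rw [hWdef, Submodule.map_span, Set.image_singleton, ← span_union,
          Set.singleton_union]
      rw [h2, hW2, finrank_span_singleton hx0] at h1
      omega
    have hWc : W ≤ W.comap f := Submodule.map_le_iff_le_comap.mp hWinv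
    set π := W.mkQ with hπ
    set fb := Submodule.mapQ W W f hWc with hfb
    have hcomm : ∀ v : M, fb (π v) = π (f v) := fun v => by
      rw [hfb, hπ, Submodule.mkQ_apply, Submodule.mapQ_apply, Submodule.mkQ_apply]
    have hypQ : ∀ Vb : Submodule F (M ⧸ W),
        finrank F ↥(Vb ⊔ Vb.map fb) ≤ finrank F ↥Vb + (r - 1) := by
      intro Vb
      obtain ⟨W', hcpl⟩ := Submodule.exists_isCompl W
      set L := W' ⊓ (Vb.comap π) with hL
      have hLmap : L.map π = Vb := by
        apply le_antisymm
        · exact (Submodule.map_mono inf_le_right).trans (Submodule.map_comap_le _ _)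
        · intro vb hvb
          obtain ⟨m0, rfl⟩ := W.mkQ_surjective vb
          have hm0 : m0 ∈ W ⊔ W' := by rw [hcpl.sup_eq_top]; trivial
          obtain ⟨y, hy, z, hz, rfl⟩ := Submodule.mem_sup.mp hm0
          have hzz : π z = π (y + z) := by
            simp only [hπ, Submodule.mkQ_apply, map_add]
            rw [(Submodule.Quotient.mk_eq_zero W).mpr hy, zero_add]
          refine ⟨z, Submodule.mem_inf.mpr ⟨hz, Submodule.mem_comap.mpr ?_⟩, ?_⟩
          · rw [hzz]; exact hvb
          · simp only [hπ, Submodule.mkQ_apply, map_add]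
            rw [(Submodule.Quotient.mk_eq_zero W).mpr hy, zero_add]
      have hfrL : finrank F ↥L = finrank F ↥Vb := by
        have hkey := finrank_map_add_inf_ker π L
        rw [Submodule.ker_mkQ, hLmap] at hkey
        have hLW : L ⊓ W = ⊥ := by
          rw [eq_bot_iff]
          intro m hm
          exact (hcpl.disjoint.symm : Disjoint W' W) (inf_le_left.trans inf_le_left : L ⊓ W ≤ W') (inf_le_right : L ⊓ W ≤ W) hm
        rw [hLW, finrank_bot] at hkey
        omega
      set V := span F {x} ⊔ L with hV
      have h1 := hyp V
      have hkey := finrank_map_add_inf_ker π (V ⊔ V.map f)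
      rw [Submodule.ker_mkQ] at hkey
      have hWle : W ≤ V ⊔ V.map f := by
        rw [hWdef, span_le]
        rintro y (rfl | rfl)
        · exact Submodule.mem_sup_left (Submodule.mem_sup_left (mem_span_singleton_self y))
        · exact Submodule.mem_sup_right
            ⟨x, Submodule.mem_sup_left (mem_span_singleton_self x), rfl⟩
      have h2 : finrank F ↥((V ⊔ V.map f) ⊓ W) = 2 := by
        rw [inf_eq_right.mpr hWle, hW2]
      have h3 : Vb ⊔ Vb.map fb ≤ (V ⊔ V.map f).map π := by
        apply sup_le
        · rw [← hLmap]
          exact Submodule.map_mono (le_sup_right.trans le_sup_left)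
        · rw [← hLmap]
          have hcomp : fb ∘ₗ π = π ∘ₗ f := Submodule.mapQ_mkQ W W f
          rw [← Submodule.map_comp, hcomp, Submodule.map_comp]
          exact Submodule.map_mono ((Submodule.map_mono le_sup_right).trans le_sup_right)
      have h4 : finrank F ↥(Vb ⊔ Vb.map fb) + 2 ≤ finrank F ↥(V ⊔ V.map f) := by
        have := Submodule.finrank_mono h3
        omega
      have h5 : finrank F ↥V ≤ finrank F ↥Vb + 1 := by
        have hs := Submodule.finrank_sup_add_finrank_inf_eq (span F {x}) L
        rw [finrank_span_singleton hx0, hfrL] at hs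
        rw [hV]
        omega
      omega
    -- apply the induction hypothesis to the quotient
    have hQrank : finrank F (M ⧸ W) + 2 = finrank F M := by
      have := W.finrank_quotient_add_finrank
      rw [hW2] at this
      exact this
    have hM2 : 2 ≤ finrank F M := by
      rw [← hQrank]; omega
    obtain ⟨μ, hμ⟩ := IH (N - 1) (by omega) (M := M ⧸ W) (by omega) fb (r - 1) hypQ
    refine ⟨μ, ?_⟩
    have hkey := finrank_map_add_inf_ker π (LinearMap.range (f - μ • 1))
    rw [Submodule.ker_mkQ] at hkey
    have hmap : (LinearMap.range (f - μ • 1)).map π ≤ LinearMap.range (fb - μ • 1) := by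
      rintro _ ⟨_, ⟨v, rfl⟩, rfl⟩
      refine ⟨π v, ?_⟩
      simp only [LinearMap.sub_apply, LinearMap.smul_apply, Module.End.one_apply, map_sub, map_smul]
      rw [hcomm v]
    have hb1 := Submodule.finrank_mono hmap
    have hb2 : finrank F ↥(LinearMap.range (f - μ • 1) ⊓ W) ≤ 2 := by
      rw [← hW2]
      exact Submodule.finrank_mono inf_le_right
    omega

end dev

theorem stmt_4 {F : Type*} [Field F] [IsAlgClosed F] {n : ℕ}
    (A : Matrix (Fin n) (Fin n) F) (r : ℕ)
    (h : ∀ (p q : ℕ) (P : Matrix (Fin p) (Fin n) F) (Q : Matrix (Fin n) (Fin q) F),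
      P * Q = 0 → (P * A * Q).rank ≤ r) :
    ∃ μ : F, (A - μ • (1 : Matrix (Fin n) (Fin n) F)).rank ≤ 2 * r := by
  set f : Module.End F (Fin n → F) := A.mulVecLin with hf
  have hyp : ∀ V : Submodule F (Fin n → F),
      finrank F ↥(V ⊔ V.map f) ≤ finrank F ↥V + r := by
    intro V
    set d := finrank F ↥V with hd
    set bV : Basis (Fin d) F ↥V := Module.finBasis F ↥V with hbV
    set Q : Matrix (Fin n) (Fin d) F := Matrix.of (fun i j => ((bV j : ↥V) : Fin n → F) i)
      with hQ
    have hQrange : LinearMap.range Q.mulVecLin = V := by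
      rw [Matrix.range_mulVecLin]
      have hT : Set.range Q.col = V.subtype '' Set.range bV := by
        rw [← Set.range_comp]
        rfl
      rw [hT, Submodule.span_image, Module.Basis.span_eq, Submodule.map_top, Submodule.range_subtype]
    set Qt := (Fin n → F) ⧸ V with hQt
    set m := finrank F Qt with hm
    set e : Qt ≃ₗ[F] (Fin m → F) := (Module.finBasis F Qt).equivFun with he
    set g : (Fin n → F) →ₗ[F] (Fin m → F) := e.toLinearMap ∘ₗ V.mkQ with hg
    set P : Matrix (Fin m) (Fin n) F := LinearMap.toMatrix' g with hP
    have hPlin : P.mulVecLin = g := by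
      rw [hP, ← Matrix.toLin'_apply']
      exact Matrix.toLin'_toMatrix' g
    have hPQlin : (P * Q).mulVecLin = 0 := by
      rw [Matrix.mulVecLin_mul, hPlin]
      apply LinearMap.ext
      intro c
      have hmem : Q.mulVecLin c ∈ V := hQrange ▸ LinearMap.mem_range_self _ c
      simp only [LinearMap.comp_apply, LinearMap.zero_apply, hg, LinearEquiv.coe_coe]
      rw [Submodule.mkQ_apply, (Submodule.Quotient.mk_eq_zero V).mpr hmem, map_zero]
    have hPQ : P * Q = 0 := by
      apply Matrix.toLin'.injective
      rw [Matrix.toLin'_apply', Matrix.toLin'_apply', hPQlin, Matrix.mulVecLin_zero]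
    have hrank := h m d P Q hPQ
    have hcomp : (P * A * Q).mulVecLin = (g ∘ₗ f) ∘ₗ Q.mulVecLin := by
      rw [Matrix.mulVecLin_mul, Matrix.mulVecLin_mul, hPlin, hf]
    have hrange : LinearMap.range (P * A * Q).mulVecLin
        = Submodule.map e.toLinearMap ((V.map f).map V.mkQ) := by
      rw [hcomp, LinearMap.range_comp, hQrange, Submodule.map_comp, hg, Submodule.map_comp]
    have hrank2 : (P * A * Q).rank = finrank F ↥((V.map f).map V.mkQ) := by
      rw [Matrix.rank, hrange]
      exact LinearEquiv.finrank_map_eq e _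
    have hmap : (V.map f).map V.mkQ = (V ⊔ V.map f).map V.mkQ := by
      rw [Submodule.map_sup, Submodule.mkQ_map_self, bot_sup_eq]
    have hkey := finrank_map_add_inf_ker V.mkQ (V ⊔ V.map f)
    rw [Submodule.ker_mkQ, inf_eq_right.mpr (le_sup_left : V ≤ V ⊔ V.map f), ← hmap] at hkey
    rw [hrank2] at hrank
    omega
  obtain ⟨μ, hμ⟩ := core (F := F) (finrank F (Fin n → F)) le_rfl f r hyp
  refine ⟨μ, ?_⟩
  have hsub : (A - μ • (1 : Matrix (Fin n) (Fin n) F)).mulVecLin = f - μ • 1 := by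
    apply LinearMap.ext
    intro v
    rw [Matrix.mulVecLin_apply, Matrix.sub_mulVec]
    simp only [LinearMap.sub_apply, LinearMap.smul_apply, Module.End.one_apply, hf,
      Matrix.mulVecLin_apply]
    rw [Matrix.smul_mulVec, Matrix.one_mulVec]
  rw [Matrix.rank, hsub]
  exact hμ
end

section
/- Let A be an n×n matrix in rational normal form with k companion-matrix diagonal blocks. Then A has a square submatrix A[I|J] with row index set I and column index set J disjoint (I ∩ J = ∅), |I| = |J| ≥ (n − k)/2, such that A[I|J] is a lower-triangular matrix with all diagonal entries equal to 1; in particular rank of the submatrix is at least (n−k)/2. -/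
private lemma sigma_fin_mk_eq_iff {k : ℕ} {m : Fin k → ℕ} {i j : Fin k}
    {a : Fin (m i)} {b : Fin (m j)} :
    (⟨i, a⟩ : Σ i, Fin (m i)) = ⟨j, b⟩ ↔ i = j ∧ (a : ℕ) = b := by
  constructor
  · intro h
    have h1 : i = j := congrArg Sigma.fst h
    subst h1
    exact ⟨rfl, congrArg Fin.val (eq_of_heq (Sigma.mk.inj_iff.mp h).2)⟩
  · rintro ⟨rfl, h2⟩
    exact congrArg _ (Fin.ext h2)

/-- A matrix in rational normal form (block diagonal of `k` companion matrices) has a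
unit lower-triangular square submatrix `A[I|J]` with `I ∩ J = ∅` and
`|I| = |J| ≥ (n-k)/2`; in particular its rank is at least `(n-k)/2`. -/
theorem stmt_5 {F : Type*} [Field F] {k : ℕ}
    (f : Fin k → Polynomial F)
    (hmonic : ∀ i, (f i).Monic)
    (hdeg : ∀ i, 0 < (f i).natDegree)
    (A : Matrix (Σ i : Fin k, Fin (f i).natDegree) (Σ i : Fin k, Fin (f i).natDegree) F)
    (hA : A = Matrix.blockDiagonal' fun i => companionMatrix (f i))
    (n : ℕ) (hn : n = ∑ i : Fin k, (f i).natDegree) :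
    ∃ (r : ℕ) (ι κ : Fin r → (Σ i : Fin k, Fin (f i).natDegree)),
      Function.Injective ι ∧ Function.Injective κ ∧
      (Set.range ι ∩ Set.range κ = ∅) ∧
      n - k ≤ 2 * r ∧
      (∀ a : Fin r, A.submatrix ι κ a a = 1) ∧
      (∀ a b : Fin r, a < b → A.submatrix ι κ a b = 0) ∧
      n - k ≤ 2 * (A.submatrix ι κ).rank := by
  classical
  set r := Fintype.card (Σ i : Fin k, Fin ((f i).natDegree / 2)) with hrdef
  have hrcard : r = ∑ i : Fin k, (f i).natDegree / 2 := by simp [hrdef]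
  have hbound : n - k ≤ 2 * r := by
    rw [hn, hrcard]
    have h1 : ∑ i : Fin k, (f i).natDegree ≤ 2 * (∑ i : Fin k, (f i).natDegree / 2) + k := by
      rw [Finset.mul_sum]
      calc ∑ i : Fin k, (f i).natDegree ≤ ∑ i : Fin k, (2 * ((f i).natDegree / 2) + 1) :=
            Finset.sum_le_sum fun i _ => by omega
        _ = (∑ i : Fin k, 2 * ((f i).natDegree / 2)) + k := by
            rw [Finset.sum_add_distrib]; simp
    omega
  let e : Fin r ≃ (Σ i : Fin k, Fin ((f i).natDegree / 2)) := (Fintype.equivFin _).symm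
  have hlt1 : ∀ x : Σ i : Fin k, Fin ((f i).natDegree / 2),
      2 * (x.2 : ℕ) + 1 < (f x.1).natDegree := fun x => by have := x.2.isLt; omega
  have hlt2 : ∀ x : Σ i : Fin k, Fin ((f i).natDegree / 2),
      2 * (x.2 : ℕ) < (f x.1).natDegree := fun x => by have := x.2.isLt; omega
  let ι : Fin r → (Σ i : Fin k, Fin (f i).natDegree) :=
    fun a => ⟨(e a).1, ⟨2 * ((e a).2 : ℕ) + 1, hlt1 _⟩⟩
  let κ : Fin r → (Σ i : Fin k, Fin (f i).natDegree) :=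
    fun a => ⟨(e a).1, ⟨2 * ((e a).2 : ℕ), hlt2 _⟩⟩
  have hsub : A.submatrix ι κ = 1 := by
    ext a b
    simp only [Matrix.submatrix_apply, hA, ι, κ]
    rcases hea : e a with ⟨i, t⟩
    rcases heb : e b with ⟨j, s⟩
    dsimp only
    by_cases hblk : i = j
    · subst hblk
      by_cases hts : t = s
      · subst hts
        have hab : a = b := e.injective (hea.trans heb.symm)
        subst hab
        rw [Matrix.blockDiagonal'_apply_eq, Matrix.one_apply_eq]
        have hne : 2 * (t : ℕ) ≠ (f i).natDegree - 1 := by have := t.isLt; omega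
        simp [companionMatrix, hne]
      · have hab : a ≠ b := fun h => hts (by
          have := hea.symm.trans ((congrArg e h).trans heb)
          exact eq_of_heq (Sigma.mk.inj_iff.mp this).2)
        rw [Matrix.blockDiagonal'_apply_eq, Matrix.one_apply_ne hab]
        have h1 : 2 * (t : ℕ) + 1 ≠ 2 * (s : ℕ) + 1 := by
          have : (t : ℕ) ≠ (s : ℕ) := fun h => hts (Fin.ext h)
          omega
        have h2 : 2 * (s : ℕ) ≠ (f i).natDegree - 1 := by have := s.isLt; omega
        simp [companionMatrix, h1, h2]; exact fun h => hts (Fin.ext h)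
    · have hab : a ≠ b := fun h => hblk (by
        have := hea.symm.trans ((congrArg e h).trans heb)
        exact congrArg Sigma.fst this)
      rw [Matrix.blockDiagonal'_apply_ne _ _ _ hblk, Matrix.one_apply_ne hab]
  refine ⟨r, ι, κ, ?_, ?_, ?_, hbound, ?_, ?_, ?_⟩
  · intro a b h
    apply e.injective
    rcases hea : e a with ⟨i, t⟩
    rcases heb : e b with ⟨j, s⟩
    simp only [ι] at h
    rw [hea, heb] at h
    dsimp only at h
    obtain ⟨rfl, hv⟩ := (sigma_fin_mk_eq_iff (m := fun i => (f i).natDegree)).mp h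
    simp only [Fin.val_mk] at hv
    exact congrArg _ (Fin.ext (by omega))
  · intro a b h
    apply e.injective
    rcases hea : e a with ⟨i, t⟩
    rcases heb : e b with ⟨j, s⟩
    simp only [κ] at h
    rw [hea, heb] at h
    dsimp only at h
    obtain ⟨rfl, hv⟩ := (sigma_fin_mk_eq_iff (m := fun i => (f i).natDegree)).mp h
    simp only [Fin.val_mk] at hv
    exact congrArg _ (Fin.ext (by omega))
  · ext x
    simp only [Set.mem_inter_iff, Set.mem_range, Set.mem_empty_iff_false, iff_false]
    rintro ⟨⟨a, ha⟩, ⟨b, hb⟩⟩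
    have h := ha.trans hb.symm
    simp only [ι, κ] at h
    rcases hea : e a with ⟨i, t⟩
    rcases heb : e b with ⟨j, s⟩
    rw [hea, heb] at h
    dsimp only at h
    obtain ⟨rfl, hv⟩ := (sigma_fin_mk_eq_iff (m := fun i => (f i).natDegree)).mp h
    simp only [Fin.val_mk] at hv
    omega
  · intro a
    rw [hsub, Matrix.one_apply_eq]
  · intro a b hab
    rw [hsub, Matrix.one_apply_ne (Fin.ne_of_lt hab)]
  · rw [hsub, Matrix.rank_one]
    simpa using hbound
end

section
/- Let S ⊆ Mat_n(F), P ∈ F^{p×n}, Q ∈ F^{n×q}, and let k be the smallest positive integer such that P·M·Q ≠ 0 for some word M of length k in S (assume such k exists). Then for any A₁, …, A_k ∈ S, rank(P·A₁⋯A_k·Q) ≤ n/k. -/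
open Module

set_option maxHeartbeats 1000000 in
set_option synthInstance.maxHeartbeats 400000 in
theorem aux_stmt_6 {F : Type*} [Field F] {n p q : ℕ}
    (P : Matrix (Fin p) (Fin n) F) (Q : Matrix (Fin n) (Fin q) F)
    (w : List (Matrix (Fin n) (Fin n) F))
    (hz : ∀ i j : ℕ, i < j → j < w.length →
      P * (w.take i).prod * ((w.drop j).prod * Q) = 0) :
    (P * w.prod * Q).rank * w.length ≤ n := by
  classical
  set k := w.length with hk
  set r := (P * w.prod * Q).rank with hr
  set X : ℕ → Submodule F (Fin n → F) :=
    fun j => LinearMap.range ((w.drop j).prod * Q).mulVecLin with hX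
  set Z : ℕ → Submodule F (Fin n → F) :=
    fun i => ⨆ j ∈ Finset.Ico i k, X j with hZ
  have hker : ∀ i j : ℕ, i < j → j < k →
      X j ≤ LinearMap.ker (P * (w.take i).prod).mulVecLin := by
    intro i j hij hjk
    rw [hX, LinearMap.range_le_ker_iff, ← Matrix.mulVecLin_mul, hz i j hij hjk,
      Matrix.mulVecLin_zero]
  have hprodeq : ∀ i : ℕ, P * (w.take i).prod * ((w.drop i).prod * Q) = P * w.prod * Q := by
    intro i
    have hprod : (w.take i).prod * (w.drop i).prod = w.prod := by
      rw [← List.prod_append, List.take_append_drop]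
    calc P * (w.take i).prod * ((w.drop i).prod * Q)
        = P * ((w.take i).prod * (w.drop i).prod) * Q := by simp only [Matrix.mul_assoc]
      _ = P * w.prod * Q := by rw [hprod]
  have himg : ∀ i : ℕ,
      Submodule.map (P * (w.take i).prod).mulVecLin (X i)
        = LinearMap.range (P * w.prod * Q).mulVecLin := by
    intro i
    rw [hX, ← LinearMap.range_comp, ← Matrix.mulVecLin_mul, hprodeq i]
  have key : ∀ m i : ℕ, i + m = k → r * m ≤ Module.finrank F (Z i) := by
    intro m
    induction m with
    | zero => intro i _; simp
    | succ m ih =>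
      intro i hi
      have hik : i < k := by omega
      set f := (P * (w.take i).prod).mulVecLin with hf
      set g := f.domRestrict (Z i) with hg
      have hZle : Z (i+1) ≤ Z i := by
        apply iSup₂_le
        intro j hj
        rw [Finset.mem_Ico] at hj
        exact le_biSup X (Finset.mem_Ico.mpr ⟨by omega, hj.2⟩)
      have hXle : X i ≤ Z i := le_biSup X (Finset.mem_Ico.mpr ⟨le_refl i, hik⟩)
      have hZker : Z (i+1) ≤ LinearMap.ker f := by
        apply iSup₂_le
        intro j hj
        rw [Finset.mem_Ico] at hj
        exact hker i j (by omega) hj.2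
      have h1 : r ≤ Module.finrank F (LinearMap.range g) := by
        have hmaple : Submodule.map f (X i) ≤ LinearMap.range g := by
          rw [hg, LinearMap.range_domRestrict]
          exact Submodule.map_mono hXle
        have : r = Module.finrank F (Submodule.map f (X i)) := by
          rw [himg i, hr, Matrix.rank]
        rw [this]
        exact Submodule.finrank_mono hmaple
      have h2 : Module.finrank F (Z (i+1)) ≤ Module.finrank F (LinearMap.ker g) := by
        rw [hg, LinearMap.ker_domRestrict]
        have he : Module.finrank F (Z (i+1))
            = Module.finrank F (Submodule.comap (Z i).subtype (Z (i+1))) :=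
          (Submodule.comapSubtypeEquivOfLe hZle).finrank_eq.symm
        rw [he]
        exact Submodule.finrank_mono (Submodule.comap_mono hZker)
      have hrank := LinearMap.finrank_range_add_finrank_ker g
      have hih := ih (i+1) (by omega)
      calc r * (m+1) = r + r * m := by ring
        _ ≤ Module.finrank F (LinearMap.range g) + Module.finrank F (LinearMap.ker g) :=
            add_le_add h1 (le_trans hih h2)
        _ = Module.finrank F (Z i) := hrank
  have hkey := key k 0 (by omega)
  have hle : Module.finrank F (Z 0) ≤ n := by
    have h := Submodule.finrank_le (Z 0)
    rwa [Module.finrank_fin_fun] at h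
  exact le_trans hkey hle

theorem stmt_6 {F : Type*} [Field F] {n p q : ℕ}
    (S : Set (Matrix (Fin n) (Fin n) F))
    (P : Matrix (Fin p) (Fin n) F) (Q : Matrix (Fin n) (Fin q) F)
    (k : ℕ) (hk : 0 < k)
    (hex : ∃ w : List (Matrix (Fin n) (Fin n) F),
      w.length = k ∧ (∀ a ∈ w, a ∈ S) ∧ P * w.prod * Q ≠ 0)
    (hmin : ∀ w : List (Matrix (Fin n) (Fin n) F),
      0 < w.length → w.length < k → (∀ a ∈ w, a ∈ S) → P * w.prod * Q = 0) :
    ∀ w : List (Matrix (Fin n) (Fin n) F), w.length = k → (∀ a ∈ w, a ∈ S) →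
      (P * w.prod * Q).rank * k ≤ n := by
  intro w hlen hS
  rw [← hlen]
  apply aux_stmt_6
  intro i j hij hjk
  rw [hlen] at hjk
  have hlen' : (w.take i ++ w.drop j).length = min i k + (k - j) := by
    simp [List.length_take, List.length_drop, hlen]
  have hmem : ∀ a ∈ w.take i ++ w.drop j, a ∈ S := by
    intro a ha
    rcases List.mem_append.mp ha with h | h
    · exact hS a (List.mem_of_mem_take h)
    · exact hS a (List.mem_of_mem_drop h)
  have h0 := hmin (w.take i ++ w.drop j) (by omega) (by omega) hmem
  rw [List.prod_append] at h0
  calc P * (w.take i).prod * ((w.drop j).prod * Q)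
      = P * ((w.take i).prod * (w.drop j).prod) * Q := by simp only [Matrix.mul_assoc]
    _ = 0 := h0
end

section
/- For any n×n matrix A over a field F, the minimum over μ ∈ F of rank(A − μ·I) equals n − k, where k is the number of invariant factors (equivalently, the number of companion blocks in the rational canonical form) of A, provided F is algebraically closed. -/
open Polynomial Matrix Finset

section Helpers

variable {F : Type*} [Field F]

/-- Taking a submatrix (with arbitrary row/column selection maps) cannot increase rank. -/
lemma my_rank_submatrix_le {m m' r r' : Type*} [Fintype m] [Fintype m'] [Fintype r] [Fintype r']
    [DecidableEq m] [DecidableEq m']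
    (A : Matrix m m' F) (f : r → m) (g : r' → m') :
    (A.submatrix f g).rank ≤ A.rank := by
  have h : A.submatrix f g =
      (Matrix.of fun (i : r) (a : m) => if a = f i then (1:F) else 0) * A *
        (Matrix.of fun (b : m') (j : r') => if b = g j then (1:F) else 0) := by
    ext i j
    simp [Matrix.mul_apply, ite_mul, mul_ite, Finset.sum_ite_eq']
  rw [h]
  exact le_trans (Matrix.rank_mul_le_left _ _) (Matrix.rank_mul_le_right _ _)

lemma divByMonic_coeff_top (f : Polynomial F) (hm : f.Monic) (hd : 0 < f.natDegree) (μ : F) :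
    (f /ₘ (X - C μ)).coeff (f.natDegree - 1) = 1 := by
  have hdeg : (f /ₘ (X - C μ)).natDegree = f.natDegree - 1 := by
    rw [natDegree_divByMonic f (monic_X_sub_C μ), natDegree_X_sub_C]
  have h0 : f.degree ≠ 0 := by
    have := natDegree_pos_iff_degree_pos.mp hd
    exact fun h => by simp [h] at this
  have h1 := leadingCoeff_divByMonic_X_sub_C f h0 μ
  rw [← hdeg, ← Polynomial.coeff_natDegree] at *
  rw [h1]; exact hm

/-- If `μ` is a root of the monic polynomial `f`, the coefficient vector of `f /ₘ (X - μ)`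
is in the kernel of `companionMatrix f - μ • 1`. -/
lemma companion_kernel (f : Polynomial F) (hm : f.Monic)
    (hd : 0 < f.natDegree) {μ : F} (hμ : f.IsRoot μ) :
    (companionMatrix f - μ • 1).mulVec
      (fun j : Fin f.natDegree => (f /ₘ (X - C μ)).coeff j) = 0 := by
  set q := f /ₘ (X - C μ) with hqdef
  have hq : (X - C μ) * q = f := mul_divByMonic_eq_iff_isRoot.mpr hμ
  have hqtop : q.coeff (f.natDegree - 1) = 1 := divByMonic_coeff_top f hm hd μ
  have hcoeff : ∀ N : ℕ, f.coeff N = (X * q).coeff N - μ * q.coeff N := by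
    intro N
    conv_lhs => rw [← hq]
    rw [sub_mul, coeff_sub, coeff_C_mul]
  funext i
  have expand : ∀ j : Fin f.natDegree,
      ((companionMatrix f - μ • 1) i j) * q.coeff j
      = (if (i:ℕ) = (j:ℕ)+1 then q.coeff j else 0) +
        (if j = (⟨f.natDegree - 1, by omega⟩ : Fin f.natDegree)
          then -(f.coeff i) * q.coeff j else 0) -
        (if i = j then μ * q.coeff j else 0) := by
    intro j
    have hc : ((j:ℕ) = f.natDegree - 1) ↔ (j = (⟨f.natDegree - 1, by omega⟩ : Fin f.natDegree)) := by
      rw [Fin.ext_iff]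
    simp only [companionMatrix, Matrix.sub_apply, Matrix.smul_apply, Matrix.one_apply,
      smul_eq_mul, hc]
    split_ifs <;> ring
  show (∑ j, ((companionMatrix f - μ • 1) i j) * q.coeff j) = 0
  rw [Finset.sum_congr rfl (fun j _ => expand j), Finset.sum_sub_distrib,
    Finset.sum_add_distrib, Finset.sum_ite_eq', Finset.sum_ite_eq]
  simp only [mem_univ, if_true]
  rw [hqtop, mul_one]
  rcases Nat.eq_zero_or_pos (i : ℕ) with hi | hi
  · have hzero : ∀ j : Fin f.natDegree, (if (i:ℕ) = (j:ℕ)+1 then q.coeff j else 0) = 0 := by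
      intro j; rw [if_neg]; omega
    rw [Finset.sum_congr rfl (fun j _ => hzero j), Finset.sum_const_zero]
    have := hcoeff 0
    rw [Polynomial.mul_coeff_zero, coeff_X_zero, zero_mul, zero_sub] at this
    rw [hi] at *
    rw [this]; ring
  · obtain ⟨i', hi'⟩ : ∃ i', (i:ℕ) = i' + 1 := ⟨(i:ℕ) - 1, by omega⟩
    have hlt : i' < f.natDegree := by have := i.isLt; omega
    have hone : ∀ j : Fin f.natDegree, (if (i:ℕ) = (j:ℕ)+1 then q.coeff j else 0)
        = (if j = (⟨i', hlt⟩ : Fin f.natDegree) then q.coeff j else 0) := by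
      intro j; congr 1
      simp only [Fin.ext_iff, eq_iff_iff]; omega
    rw [Finset.sum_congr rfl (fun j _ => hone j), Finset.sum_ite_eq']
    simp only [mem_univ, if_true]
    have := hcoeff (i' + 1)
    rw [coeff_X_mul] at this
    rw [← hi'] at this
    rw [this]
    simp only [hi']
    ring

/-- The "shifted–triangular" square submatrix of the block diagonal matrix of shifted
companion matrices has determinant 1. -/
lemma lower_det {k : ℕ} (f : Fin k → Polynomial F) (μ : F) :
    (((Matrix.blockDiagonal' fun i => companionMatrix (f i) - μ • 1)).submatrix
      (fun p : Σ i : Fin k, Fin ((f i).natDegree - 1) =>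
        (⟨p.1, ⟨(p.2 : ℕ) + 1, by have := p.2.isLt; omega⟩⟩ : Σ i : Fin k, Fin (f i).natDegree))
      (fun p : Σ i : Fin k, Fin ((f i).natDegree - 1) =>
        (⟨p.1, ⟨(p.2 : ℕ), by have := p.2.isLt; omega⟩⟩ : Σ i : Fin k, Fin (f i).natDegree))).det
      = 1 := by
  letI : LinearOrder (Σ i : Fin k, Fin ((f i).natDegree - 1)) := Sigma.Lex.linearOrder
  rw [Matrix.det_of_upperTriangular]
  · apply Finset.prod_eq_one
    intro p _
    rw [Matrix.submatrix_apply, Matrix.blockDiagonal'_apply_eq]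
    simp only [companionMatrix, Matrix.sub_apply, Matrix.smul_apply, Matrix.one_apply,
      smul_eq_mul]
    have h2 : ¬ ((p.2:ℕ) = (f p.1).natDegree - 1) := by have := p.2.isLt; omega
    have h3 : ¬ ((⟨(p.2:ℕ)+1, by have := p.2.isLt; omega⟩ : Fin ((f p.1).natDegree))
        = ⟨(p.2:ℕ), by have := p.2.isLt; omega⟩) := by
      simp [Fin.ext_iff]
    rw [if_neg h2, if_neg h3]
    simp
  · intro p q hlt
    rw [Matrix.submatrix_apply]
    have hlt' : q.1 < p.1 ∨ ∃ h : q.1 = p.1, h.rec q.2 < p.2 := Sigma.lex_iff.mp hlt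
    rcases hlt' with h | ⟨h, h2⟩
    · rw [Matrix.blockDiagonal'_apply_ne]
      exact fun hh => absurd hh.symm (ne_of_lt h)
    · rcases p with ⟨i, r⟩
      rcases q with ⟨i', c⟩
      cases h
      rw [Matrix.blockDiagonal'_apply_eq]
      simp only [companionMatrix, Matrix.sub_apply, Matrix.smul_apply, Matrix.one_apply,
        smul_eq_mul]
      have hc : (c : ℕ) < (r : ℕ) := h2
      have h1 : ¬ ((r:ℕ)+1 = (c:ℕ)+1) := by omega
      have hh2 : ¬ ((c:ℕ) = (f i).natDegree - 1) := by have := c.isLt; omega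
      have h3 : ¬ ((⟨(r:ℕ)+1, by have := r.isLt; omega⟩ : Fin ((f i).natDegree))
          = ⟨(c:ℕ), by have := c.isLt; omega⟩) := by
        simp [Fin.ext_iff]; omega
      rw [if_neg h1, if_neg hh2, if_neg h3]
      ring

/-- Lower bound on the rank of the shifted block diagonal matrix. -/
lemma lower_bound {k : ℕ} (f : Fin k → Polynomial F) (μ : F) :
    ∑ i, ((f i).natDegree - 1)
      ≤ (Matrix.blockDiagonal' fun i => companionMatrix (f i) - μ • 1).rank := by
  have hdet := lower_det f μ
  have hunit : IsUnit (((Matrix.blockDiagonal' fun i => companionMatrix (f i) - μ • 1)).submatrix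
      (fun p : Σ i : Fin k, Fin ((f i).natDegree - 1) =>
        (⟨p.1, ⟨(p.2 : ℕ) + 1, by have := p.2.isLt; omega⟩⟩ : Σ i : Fin k, Fin (f i).natDegree))
      (fun p : Σ i : Fin k, Fin ((f i).natDegree - 1) =>
        (⟨p.1, ⟨(p.2 : ℕ), by have := p.2.isLt; omega⟩⟩ : Σ i : Fin k, Fin (f i).natDegree))) :=
    (Matrix.isUnit_iff_isUnit_det _).mpr (by rw [hdet]; exact isUnit_one)
  have h1 := Matrix.rank_of_isUnit _ hunit
  have h2 := my_rank_submatrix_le (Matrix.blockDiagonal' fun i => companionMatrix (f i) - μ • 1)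
      (fun p : Σ i : Fin k, Fin ((f i).natDegree - 1) =>
        (⟨p.1, ⟨(p.2 : ℕ) + 1, by have := p.2.isLt; omega⟩⟩ : Σ i : Fin k, Fin (f i).natDegree))
      (fun p : Σ i : Fin k, Fin ((f i).natDegree - 1) =>
        (⟨p.1, ⟨(p.2 : ℕ), by have := p.2.isLt; omega⟩⟩ : Σ i : Fin k, Fin (f i).natDegree))
  rw [h1] at h2
  simpa [Fintype.card_sigma] using h2

/-- Upper bound: if `μ` is a common root of all the `f i`, the kernel has dimension
at least `k`. -/
lemma upper_bound {k : ℕ} (f : Fin k → Polynomial F)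
    (hmonic : ∀ i, (f i).Monic) (hdeg : ∀ i, 0 < (f i).natDegree)
    {μ : F} (hroot : ∀ i, (f i).IsRoot μ) :
    (Matrix.blockDiagonal' fun i => companionMatrix (f i) - μ • 1).rank + k
      ≤ ∑ i, (f i).natDegree := by
  classical
  set M := Matrix.blockDiagonal' fun i => companionMatrix (f i) - μ • 1 with hM
  set v : ∀ i : Fin k, Fin (f i).natDegree → F :=
    fun i r => ((f i) /ₘ (X - C μ)).coeff r with hv
  have hker : ∀ i, (companionMatrix (f i) - μ • 1).mulVec (v i) = 0 :=
    fun i => companion_kernel (f i) (hmonic i) (hdeg i) (hroot i)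
  have hvtop : ∀ i, v i ⟨(f i).natDegree - 1, by have := hdeg i; omega⟩ = 1 :=
    fun i => divByMonic_coeff_top (f i) (hmonic i) (hdeg i) μ
  set φ : (Fin k → F) →ₗ[F] ((Σ i : Fin k, Fin (f i).natDegree) → F) :=
    { toFun := fun c p => c p.1 * v p.1 p.2
      map_add' := fun a b => by funext p; simp [add_mul]
      map_smul' := fun s a => by funext p; simp [mul_assoc] } with hφ
  have hφinj : Function.Injective φ := by
    intro a b hab
    funext i
    have h1 := congrFun hab ⟨i, ⟨(f i).natDegree - 1, by have := hdeg i; omega⟩⟩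
    simpa [hφ, hvtop i] using h1
  have hrange : LinearMap.range φ ≤ LinearMap.ker M.mulVecLin := by
    rintro _ ⟨c, rfl⟩
    rw [LinearMap.mem_ker, Matrix.mulVecLin_apply]
    funext p
    rcases p with ⟨i, r⟩
    show (∑ p' : Σ i : Fin k, Fin (f i).natDegree,
      M ⟨i, r⟩ p' * (c p'.1 * v p'.1 p'.2)) = 0
    rw [← Finset.univ_sigma_univ, Finset.sum_sigma]
    rw [Finset.sum_eq_single_of_mem i (Finset.mem_univ i)]
    · have h2 : ∀ r' : Fin (f i).natDegree,
          M ⟨i, r⟩ ⟨i, r'⟩ * (c i * v i r')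
          = c i * ((companionMatrix (f i) - μ • 1) r r' * v i r') := by
        intro r'
        rw [hM, Matrix.blockDiagonal'_apply_eq]
        ring
      rw [Finset.sum_congr rfl (fun r' _ => h2 r'), ← Finset.mul_sum]
      have h3 : (∑ r', (companionMatrix (f i) - μ • 1) r r' * v i r')
          = (companionMatrix (f i) - μ • 1).mulVec (v i) r := rfl
      rw [h3, hker i, Pi.zero_apply, mul_zero]
    · intro i' _ hne
      apply Finset.sum_eq_zero
      intro r' _
      rw [hM, Matrix.blockDiagonal'_apply_ne _ _ _ (Ne.symm hne), zero_mul]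
  have hkle : k ≤ Module.finrank F (LinearMap.ker M.mulVecLin) := by
    calc k = Module.finrank F (Fin k → F) := (Module.finrank_fin_fun F).symm
      _ = Module.finrank F (LinearMap.range φ) := (LinearMap.finrank_range_of_inj hφinj).symm
      _ ≤ _ := Submodule.finrank_mono hrange
  have hrn := LinearMap.finrank_range_add_finrank_ker M.mulVecLin
  have hfr : Module.finrank F ((Σ i : Fin k, Fin (f i).natDegree) → F)
      = ∑ i, (f i).natDegree := by
    rw [Module.finrank_pi]
    simp [Fintype.card_sigma]
  rw [hfr] at hrn
  have hMrank : M.rank = Module.finrank F (LinearMap.range M.mulVecLin) := rfl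
  omega

/-- Conjugation by `Q` and reindexing by `e` preserve the rank of `A - μ • 1`. -/
lemma key_rank {n k : ℕ}
    (A : Matrix (Fin n) (Fin n) F) (f : Fin k → Polynomial F)
    (e : (Σ i : Fin k, Fin (f i).natDegree) ≃ Fin n)
    (Q : Matrix (Fin n) (Fin n) F) (hQ : IsUnit Q.det)
    (hA : A = Q * ((Matrix.blockDiagonal' fun i => companionMatrix (f i)).submatrix
        e.symm e.symm) * Q⁻¹) (μ : F) :
    (A - μ • 1).rank
      = (Matrix.blockDiagonal' fun i => companionMatrix (f i) - μ • 1).rank := by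
  have hQQ : Q * Q⁻¹ = 1 := Matrix.mul_nonsing_inv Q hQ
  have hsm : (Matrix.blockDiagonal' fun i => companionMatrix (f i) - μ • 1)
      = (Matrix.blockDiagonal' fun i => companionMatrix (f i)) - μ • 1 := by
    have h0 : (fun i => companionMatrix (f i) - μ • 1)
        = (fun i => companionMatrix (f i))
          - μ • (1 : ∀ i : Fin k, Matrix (Fin (f i).natDegree) (Fin (f i).natDegree) F) := rfl
    rw [h0, Matrix.blockDiagonal'_sub, Matrix.blockDiagonal'_smul, Matrix.blockDiagonal'_one]
  have hsub : (Matrix.blockDiagonal' fun i => companionMatrix (f i) - μ • 1).submatrix e.symm e.symm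
      = (Matrix.blockDiagonal' fun i => companionMatrix (f i)).submatrix e.symm e.symm - μ • 1 := by
    rw [hsm]
    ext p q
    simp [Matrix.submatrix_apply, Matrix.sub_apply, Matrix.smul_apply, Matrix.one_apply,
      e.symm.injective.eq_iff]
  have h1 : A - μ • 1
      = Q * ((Matrix.blockDiagonal' fun i => companionMatrix (f i) - μ • 1).submatrix e.symm e.symm) * Q⁻¹ := by
    rw [hsub, Matrix.mul_sub, Matrix.sub_mul, ← hA]
    congr 1
    rw [Matrix.mul_smul, Matrix.mul_one, Matrix.smul_mul, hQQ]
  rw [h1, mul_assoc, Matrix.rank_mul_eq_right_of_isUnit_det Q _ hQ,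
    Matrix.rank_mul_eq_left_of_isUnit_det Q⁻¹ _ (Matrix.isUnit_nonsing_inv_det Q hQ),
    Matrix.rank_submatrix]

end Helpers

set_option maxHeartbeats 1000000 in
/-- For `A` with `k` invariant factors (`k` companion blocks in its rational canonical
form), the minimum over `μ` of `rank (A - μ I)` is exactly `n - k`. -/
theorem stmt_7 {F : Type*} [Field F] [IsAlgClosed F] {n k : ℕ}
    (A : Matrix (Fin n) (Fin n) F)
    (f : Fin k → Polynomial F)
    (hmonic : ∀ i, (f i).Monic)
    (hdeg : ∀ i, 0 < (f i).natDegree)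
    (hchain : ∀ i j : Fin k, i ≤ j → f i ∣ f j)
    (e : (Σ i : Fin k, Fin (f i).natDegree) ≃ Fin n)
    (Q : Matrix (Fin n) (Fin n) F) (hQ : IsUnit Q.det)
    (hA : A = Q * ((Matrix.blockDiagonal' fun i => companionMatrix (f i)).submatrix
        e.symm e.symm) * Q⁻¹) :
    IsLeast {r : ℕ | ∃ μ : F, (A - μ • (1 : Matrix (Fin n) (Fin n) F)).rank = r}
      (n - k) := by
  classical
  have hcard : ∑ i, (f i).natDegree = n := by
    have := Fintype.card_congr e
    simpa [Fintype.card_sigma] using this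
  have hsum2 : ∑ i, ((f i).natDegree - 1) = n - k := by
    have h1 : ∑ i, ((f i).natDegree - 1) + k = n := by
      calc ∑ i, ((f i).natDegree - 1) + k
          = ∑ i, ((f i).natDegree - 1) + ∑ _i : Fin k, 1 := by simp
        _ = ∑ i, ((f i).natDegree - 1 + 1) := (Finset.sum_add_distrib).symm
        _ = ∑ i, (f i).natDegree := Finset.sum_congr rfl fun i _ => Nat.succ_pred_eq_of_pos (hdeg i)
        _ = n := hcard
    omega
  have key := key_rank A f e Q hQ hA
  have lowerB : ∀ μ : F, n - k
      ≤ (Matrix.blockDiagonal' fun i => companionMatrix (f i) - μ • 1).rank := by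
    intro μ
    have := lower_bound f μ
    rwa [hsum2] at this
  constructor
  · rcases Nat.eq_zero_or_pos k with hk | hk
    · subst hk
      have hn : n = 0 := by simpa using hcard.symm
      refine ⟨0, ?_⟩
      have h0 := Matrix.rank_le_card_width (A - (0:F) • 1)
      rw [Fintype.card_fin] at h0
      omega
    · set i0 : Fin k := ⟨0, hk⟩ with hi0
      have h0 : (f i0).degree ≠ 0 := by
        have := natDegree_pos_iff_degree_pos.mp (hdeg i0)
        exact fun h => by simp [h] at this
      obtain ⟨μ0, hμ0⟩ := IsAlgClosed.exists_root (f i0) h0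
      have hroot : ∀ i, (f i).IsRoot μ0 := by
        intro i
        obtain ⟨g, hg⟩ := hchain i0 i (by simp [hi0, Fin.le_def])
        rw [hg]
        simp only [IsRoot, eval_mul] at hμ0 ⊢
        rw [hμ0, zero_mul]
      refine ⟨μ0, ?_⟩
      rw [key μ0]
      have hub := upper_bound f hmonic hdeg hroot
      rw [hcard] at hub
      have hlb := lowerB μ0
      omega
  · rintro r ⟨μ, hr⟩
    rw [key μ] at hr
    rw [← hr]
    exact lowerB μ
end

section
/- Let S be an irreducible subset of Mat_n(F) (F algebraically closed) and let v ∈ F^n be a nonzero vector. If the subspace spanned by vectors M·v, where M ranges over words in S of length at most n−2 (including the identity), is not all of F^n, then the F-linear span of S contains a matrix whose minimal polynomial has degree n. -/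
section Aux

variable {F : Type*} [Field F] {n : ℕ}

def Wsp (S : Set (Matrix (Fin n) (Fin n) F)) (v : Fin n → F) (k : ℕ) :
    Submodule F (Fin n → F) :=
  Submodule.span F {x : Fin n → F | ∃ M ∈ wordsLe S k, x = M.mulVec v}

lemma mem_Wsp_succ {S : Set (Matrix (Fin n) (Fin n) F)} {v : Fin n → F} {k : ℕ}
    {A : Matrix (Fin n) (Fin n) F} (hA : A ∈ S) {x : Fin n → F} (hx : x ∈ Wsp S v k) :
    A.mulVec x ∈ Wsp S v (k + 1) := by
  have : Wsp S v k ≤ Submodule.comap A.mulVecLin (Wsp S v (k + 1)) := by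
    apply Submodule.span_le.2
    rintro y ⟨M, ⟨l, hl, hlS, rfl⟩, rfl⟩
    apply Submodule.subset_span
    refine ⟨A * l.prod, ⟨A :: l, by simpa using hl, ?_, by simp⟩, ?_⟩
    · intro a ha
      rcases List.mem_cons.1 ha with rfl | ha
      · exact hA
      · exact hlS a ha
    · simp [Matrix.mulVecLin_apply, Matrix.mulVec_mulVec]
  simpa [Matrix.mulVecLin_apply] using this hx

def mulVecRight (x : Fin n → F) : Matrix (Fin n) (Fin n) F →ₗ[F] (Fin n → F) where
  toFun M := M.mulVec x
  map_add' A B := Matrix.add_mulVec A B x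
  map_smul' c A := Matrix.smul_mulVec c A x

@[simp] lemma mulVecRight_apply (x : Fin n → F) (M : Matrix (Fin n) (Fin n) F) :
    mulVecRight x M = M.mulVec x := rfl

lemma mem_Wsp_succ_span {S : Set (Matrix (Fin n) (Fin n) F)} {v : Fin n → F} {k : ℕ}
    {B : Matrix (Fin n) (Fin n) F} (hB : B ∈ Submodule.span F S)
    {x : Fin n → F} (hx : x ∈ Wsp S v k) :
    B.mulVec x ∈ Wsp S v (k + 1) := by
  have : Submodule.span F S ≤ Submodule.comap (mulVecRight x) (Wsp S v (k + 1)) := by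
    apply Submodule.span_le.2
    intro A hA
    exact mem_Wsp_succ hA hx
  exact this hB

/-- A nonzero subspace invariant under an irreducible set is everything. -/
lemma inv_eq_top {S : Set (Matrix (Fin n) (Fin n) F)}
    (hirr : Algebra.adjoin F S = (⊤ : Subalgebra F (Matrix (Fin n) (Fin n) F)))
    {U : Submodule F (Fin n → F)} {v : Fin n → F} (hvU : v ∈ U) (hv : v ≠ 0)
    (hinv : ∀ A ∈ S, ∀ x ∈ U, A.mulVec x ∈ U) : U = ⊤ := by
  classical
  let 𝒜 : Subalgebra F (Matrix (Fin n) (Fin n) F) :=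
  { carrier := {M | ∀ x ∈ U, M.mulVec x ∈ U}
    mul_mem' := by
      intro a b ha hb x hx
      rw [← Matrix.mulVec_mulVec]
      exact ha _ (hb x hx)
    one_mem' := by intro x hx; simpa [Matrix.one_mulVec] using hx
    add_mem' := by
      intro a b ha hb x hx
      rw [Matrix.add_mulVec]
      exact U.add_mem (ha x hx) (hb x hx)
    zero_mem' := by intro x hx; simpa [Matrix.zero_mulVec] using U.zero_mem
    algebraMap_mem' := by
      intro c x hx
      rw [Algebra.algebraMap_eq_smul_one, Matrix.smul_mulVec, Matrix.one_mulVec]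
      exact U.smul_mem c hx }
  have hle : Algebra.adjoin F S ≤ 𝒜 := Algebra.adjoin_le fun A hA => hinv A hA
  rw [hirr] at hle
  have hall : ∀ M : Matrix (Fin n) (Fin n) F, ∀ x ∈ U, M.mulVec x ∈ U :=
    fun M => hle (show M ∈ (⊤ : Subalgebra F _) from trivial)
  obtain ⟨i, hi⟩ := Function.ne_iff.1 hv
  rw [eq_top_iff]
  intro u _
  have : (Matrix.of fun a b => if b = i then u a * (v i)⁻¹ else 0).mulVec v = u := by
    funext a
    simp only [Matrix.mulVec, dotProduct, Matrix.of_apply]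
    rw [Finset.sum_eq_single i]
    · simp [mul_assoc, inv_mul_cancel₀ (by simpa using hi)]
    · intro b _ hb; simp [hb]
    · simp
  rw [← this]
  exact hall _ v hvU

lemma Wsp_mono (S : Set (Matrix (Fin n) (Fin n) F)) (v : Fin n → F) :
    Monotone (Wsp S v) := by
  apply monotone_nat_of_le_succ
  intro k
  apply Submodule.span_mono
  rintro x ⟨M, ⟨l, hl, hlS, hM⟩, rfl⟩
  exact ⟨M, ⟨l, hl.trans (Nat.le_succ k), hlS, hM⟩, rfl⟩

lemma v_mem_Wsp (S : Set (Matrix (Fin n) (Fin n) F)) (v : Fin n → F) (k : ℕ) :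
    v ∈ Wsp S v k := by
  apply Submodule.subset_span
  exact ⟨1, ⟨[], by simp⟩, by simp [Matrix.one_mulVec]⟩

lemma Wsp_strict {S : Set (Matrix (Fin n) (Fin n) F)}
    (hirr : Algebra.adjoin F S = (⊤ : Subalgebra F (Matrix (Fin n) (Fin n) F)))
    {v : Fin n → F} (hv : v ≠ 0) {m : ℕ} (h : Wsp S v m ≠ ⊤)
    {k : ℕ} (hk : k ≤ m) : Wsp S v k < Wsp S v (k + 1) := by
  rcases lt_or_eq_of_le (Wsp_mono S v (Nat.le_succ k)) with hlt | heq
  · exact hlt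
  exfalso
  apply h
  have hinv : ∀ A ∈ S, ∀ x ∈ Wsp S v k, A.mulVec x ∈ Wsp S v k := by
    intro A hA x hx
    rw [heq]
    exact mem_Wsp_succ hA hx
  have htop : Wsp S v k = ⊤ := inv_eq_top hirr (v_mem_Wsp S v k) hv hinv
  rw [eq_top_iff, ← htop]
  exact Wsp_mono S v hk

open Module in
lemma Wsp_finrank {S : Set (Matrix (Fin n) (Fin n) F)}
    (hirr : Algebra.adjoin F S = (⊤ : Subalgebra F (Matrix (Fin n) (Fin n) F)))
    {v : Fin n → F} (hv : v ≠ 0) {m : ℕ} (hm : m + 2 = n) (h : Wsp S v m ≠ ⊤) :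
    ∀ k ≤ m + 1, finrank F (Wsp S v k) = k + 1 := by
  set f : ℕ → ℕ := fun k => finrank F (Wsp S v k) with hf
  have hchain : ∀ j k, k + j ≤ m + 1 → f k + j ≤ f (k + j) := by
    intro j
    induction j with
    | zero => intro k _; simp
    | succ j ih =>
      intro k hkj
      have h1 : f k + j ≤ f (k + j) := ih k (by omega)
      have h2 : f (k + j) < f (k + j + 1) :=
        Submodule.finrank_lt_finrank_of_lt (Wsp_strict hirr hv h (by omega))
      rw [show k + (j + 1) = k + j + 1 by omega]
      omega
  have hf0 : 1 ≤ f 0 := by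
    rcases Nat.eq_zero_or_pos (f 0) with h0 | h0
    · exfalso
      have hb : Wsp S v 0 = ⊥ := Submodule.finrank_eq_zero.mp h0
      exact hv (by simpa [hb] using v_mem_Wsp S v 0)
    · exact h0
  have hup : f m < n := by
    have h1 : Wsp S v m < ⊤ := lt_top_iff_ne_top.2 h
    have := Submodule.finrank_lt (K := F) (V := Fin n → F) h1.ne
    simpa [finrank_fin_fun] using this
  intro k hk
  show f k = k + 1
  have hlow : f 0 + k ≤ f k := by
    have := hchain k 0 (by omega)
    rwa [Nat.zero_add] at this
  rcases Nat.lt_or_ge k (m + 1) with hk' | hk'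
  · -- k ≤ m
    have h2 : f k + (m - k) ≤ f m := by
      have := hchain (m - k) k (by omega)
      rwa [show k + (m - k) = m by omega] at this
    omega
  · -- k = m + 1
    have h2 : f k ≤ n := by
      have := Submodule.finrank_le (Wsp S v k)
      simpa [finrank_fin_fun] using this
    omega

end Aux

theorem stmt_8 {F : Type*} [Field F] [IsAlgClosed F] {n : ℕ}
    (S : Set (Matrix (Fin n) (Fin n) F))
    (hirr : Algebra.adjoin F S = (⊤ : Subalgebra F (Matrix (Fin n) (Fin n) F)))
    (v : Fin n → F) (hv : v ≠ 0)
    (h : Submodule.span F {x : Fin n → F | ∃ M ∈ wordsLe S (n - 2), x = M.mulVec v}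
        ≠ ⊤) :
    ∃ B ∈ Submodule.span F S, (minpoly F B).natDegree = n := by
  classical
  change Wsp S v (n - 2) ≠ ⊤ at h
  rcases Nat.lt_or_ge n 2 with hn | hn
  · -- degenerate cases n = 0, 1
    exfalso
    interval_cases n
    · exact hv (Subsingleton.elim v 0)
    · apply h
      have h0 : v 0 ≠ 0 := by
        intro h0; apply hv; funext i; fin_cases i; exact h0
      rw [eq_top_iff]
      intro x _
      have hx : x = (x 0 / v 0) • v := by
        funext i; fin_cases i; simp [div_mul_cancel₀, h0]
      rw [hx]
      exact (Wsp S v (1 - 2)).smul_mem _ (v_mem_Wsp S v _)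
  -- main case
  set m := n - 2 with hmdef
  have hm : m + 2 = n := by omega
  have hfr : ∀ k ≤ m + 1, Module.finrank F (Wsp S v k) = k + 1 := Wsp_finrank hirr hv hm h
  have hstrict : ∀ k ≤ m, Wsp S v k < Wsp S v (k + 1) := fun k hk => Wsp_strict hirr hv h hk
  have he : ∀ k, k ≤ m → ∃ x, x ∈ Wsp S v (k + 1) ∧ x ∉ Wsp S v k := by
    intro k hk
    obtain ⟨x, hx1, hx2⟩ := SetLike.exists_of_lt (hstrict k hk)
    exact ⟨x, hx1, hx2⟩
  let e : ℕ → (Fin n → F) := fun k =>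
    Nat.casesOn k v (fun j => if hj : j ≤ m then Classical.choose (he j hj) else 0)
  have he0 : e 0 = v := rfl
  have he1 : ∀ k ≤ m + 1, e k ∈ Wsp S v k := by
    intro k hk
    cases k with
    | zero => exact v_mem_Wsp S v 0
    | succ j =>
      have hj : j ≤ m := by omega
      show (if hj : j ≤ m then Classical.choose (he j hj) else 0) ∈ _
      rw [dif_pos hj]
      exact (Classical.choose_spec (he j hj)).1
  have he2 : ∀ j ≤ m, e (j + 1) ∉ Wsp S v j := by
    intro j hj
    show (if hj : j ≤ m then Classical.choose (he j hj) else 0) ∉ _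
    rw [dif_pos hj]
    exact (Classical.choose_spec (he j hj)).2
  have hsup : ∀ j ≤ m, Wsp S v (j + 1) = Wsp S v j ⊔ (F ∙ e (j + 1)) := by
    intro j hj
    have hle : Wsp S v j ⊔ (F ∙ e (j + 1)) ≤ Wsp S v (j + 1) :=
      sup_le (Wsp_mono S v (Nat.le_succ j))
        ((Submodule.span_singleton_le_iff_mem _ _).2 (he1 (j + 1) (by omega)))
    have hlt : Wsp S v j < Wsp S v j ⊔ (F ∙ e (j + 1)) := by
      refine lt_of_le_of_ne le_sup_left ?_
      intro heq
      apply he2 j hj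
      rw [heq]
      exact le_sup_right (α := Submodule F (Fin n → F)) (Submodule.mem_span_singleton_self _)
    have h1 : Module.finrank F (Wsp S v j) < Module.finrank F ↥(Wsp S v j ⊔ (F ∙ e (j + 1))) :=
      Submodule.finrank_lt_finrank_of_lt hlt
    rw [hfr j (by omega)] at h1
    have h2 : Module.finrank F (Wsp S v (j + 1)) ≤
        Module.finrank F ↥(Wsp S v j ⊔ (F ∙ e (j + 1))) := by
      rw [hfr (j + 1) (by omega)]
      omega
    exact (Submodule.eq_of_le_of_finrank_le hle h2).symm
  have hW0 : Wsp S v 0 = Submodule.span F {v} := by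
    apply le_antisymm
    · apply Submodule.span_le.2
      rintro x ⟨M, ⟨l, hl, -, rfl⟩, rfl⟩
      have : l = [] := List.length_eq_zero_iff.1 (by omega)
      subst this
      simp [Matrix.one_mulVec, Submodule.mem_span_singleton_self]
    · exact Submodule.span_le.2 (by simpa using v_mem_Wsp S v 0)
  have hespan : ∀ k ≤ m + 1, Wsp S v k = Submodule.span F (e '' Set.Iic k) := by
    intro k
    induction k with
    | zero =>
      intro _
      rw [hW0]
      congr 1
      have : Set.Iic (0 : ℕ) = {0} := by ext x; simp [Nat.le_zero]
      rw [this, Set.image_singleton, he0]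
    | succ j ih =>
      intro hjk
      rw [hsup j (by omega), ih (by omega), show Set.Iic (j + 1) = insert (j + 1) (Set.Iic j) from
        (by ext x; simp only [Set.mem_Iic, Set.mem_insert_iff]; omega), Set.image_insert_eq, Submodule.span_insert]
      rw [sup_comm]
  have hkey : ∀ j ≤ m, ∃ A ∈ S, A.mulVec (e j) ∉ Wsp S v j := by
    intro j hj
    by_contra hc
    push_neg at hc
    have hinv : ∀ A ∈ S, ∀ x ∈ Wsp S v j, A.mulVec x ∈ Wsp S v j := by
      intro A hA x hx
      have hsub : Wsp S v j ≤ Submodule.comap A.mulVecLin (Wsp S v j) := by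
        nth_rewrite 1 [hespan j (by omega)]
        apply Submodule.span_le.2
        rintro y ⟨i, hi, rfl⟩
        simp only [Set.mem_Iic] at hi
        rcases Nat.lt_or_ge i j with hij | hij
        · have : A.mulVec (e i) ∈ Wsp S v (i + 1) := mem_Wsp_succ hA (he1 i (by omega))
          exact Submodule.mem_comap.2 (by
            simpa [Matrix.mulVecLin_apply] using Wsp_mono S v (by omega : i + 1 ≤ j) this)
        · have : i = j := by omega
          subst this
          exact Submodule.mem_comap.2 (by simpa [Matrix.mulVecLin_apply] using hc A hA)
      simpa [Matrix.mulVecLin_apply] using hsub hx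
    have htop : Wsp S v j = ⊤ :=
      inv_eq_top hirr (v_mem_Wsp S v j) hv hinv
    apply h
    rw [eq_top_iff, ← htop]
    exact Wsp_mono S v (by omega)
  -- find B in span S avoiding all the kernels
  obtain ⟨B, hB, hB'⟩ :
      ∃ B ∈ Submodule.span F S, ∀ j ≤ m, B.mulVec (e j) ∉ Wsp S v j := by
    set T := Submodule.span F S with hT
    let p : Fin (m + 1) → Subspace F ↥T := fun j =>
      Submodule.comap T.subtype (Submodule.comap (mulVecRight (e j)) (Wsp S v j))
    have hcov : ⋃ j, (p j : Set ↥T) ≠ Set.univ := by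
      intro hcovers
      obtain ⟨j, hjtop⟩ := Subspace.exists_eq_top_of_iUnion_eq_univ hcovers
      obtain ⟨A, hAS, hA⟩ := hkey j (by omega : (j : ℕ) ≤ m)
      have hAT : A ∈ T := Submodule.subset_span hAS
      have hmem : (⟨A, hAT⟩ : ↥T) ∈ p j := hjtop ▸ Submodule.mem_top
      exact hA hmem
    obtain ⟨x, hx⟩ : ∃ x : ↥T, x ∉ ⋃ j, (p j : Set ↥T) := by
      by_contra hc
      push_neg at hc
      exact hcov (Set.eq_univ_of_forall hc)
    refine ⟨(x : Matrix (Fin n) (Fin n) F), x.2, ?_⟩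
    intro j hj hmem
    apply hx
    apply Set.mem_iUnion.2
    refine ⟨⟨j, by omega⟩, ?_⟩
    exact hmem
  have hBW : ∀ k, ∀ x ∈ Wsp S v k, B.mulVec x ∈ Wsp S v (k + 1) :=
    fun k x hx => mem_Wsp_succ_span hB hx
  have hpow : ∀ k ≤ m + 1,
      (B ^ k).mulVec v ∈ Wsp S v k ∧ (1 ≤ k → (B ^ k).mulVec v ∉ Wsp S v (k - 1)) := by
    intro k
    induction k with
    | zero =>
      intro _
      refine ⟨by simpa [Matrix.one_mulVec] using v_mem_Wsp S v 0, by omega⟩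
    | succ k ih =>
      intro hk1
      obtain ⟨ih1, ih2⟩ := ih (by omega)
      have hrw : (B ^ (k + 1)).mulVec v = B.mulVec ((B ^ k).mulVec v) := by
        rw [pow_succ', Matrix.mulVec_mulVec]
      constructor
      · rw [hrw]
        exact hBW k _ ih1
      · intro _
        simp only [Nat.add_sub_cancel]
        rcases Nat.eq_zero_or_pos k with rfl | hkpos
        · -- k = 0 : B v = B (e 0)
          rw [hrw]
          simpa [Matrix.one_mulVec, he0] using hB' 0 (by omega)
        · -- k ≥ 1
          have hsupk := hsup (k - 1) (by omega)
          rw [show k - 1 + 1 = k by omega] at hsupk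
          have hmem : (B ^ k).mulVec v ∈ Wsp S v (k - 1) ⊔ (F ∙ e k) := by
            rw [← hsupk]; exact ih1
          obtain ⟨y, hy, z, hz, hyz⟩ := Submodule.mem_sup.1 hmem
          obtain ⟨c, rfl⟩ := Submodule.mem_span_singleton.1 hz
          have hc : c ≠ 0 := by
            rintro rfl
            apply ih2 hkpos
            rw [← hyz]
            simpa using hy
          intro hcontra
          have hBy : B.mulVec y ∈ Wsp S v k := by
            have := hBW (k - 1) y hy
            rwa [show k - 1 + 1 = k by omega] at this
          have hBe : B.mulVec (e k) ∈ Wsp S v k := by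
            have h1 : (B ^ (k + 1)).mulVec v = B.mulVec y + c • B.mulVec (e k) := by
              rw [hrw, ← hyz, Matrix.mulVec_add, Matrix.mulVec_smul]
            have h2 : c • B.mulVec (e k) ∈ Wsp S v k := by
              have : c • B.mulVec (e k) = (B ^ (k + 1)).mulVec v - B.mulVec y := by
                rw [h1]; abel
              rw [this]
              exact Submodule.sub_mem _ hcontra hBy
            have := Submodule.smul_mem _ c⁻¹ h2
            rwa [smul_smul, inv_mul_cancel₀ hc, one_smul] at this
          exact hB' k (by omega) hBe
  refine ⟨B, hB, ?_⟩
  haveI : Nonempty (Fin n) := ⟨⟨0, by omega⟩⟩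
  have hInt : IsIntegral F B := ⟨B.charpoly, B.charpoly_monic, B.aeval_self_charpoly⟩
  have hmon : (minpoly F B).Monic := minpoly.monic hInt
  have hupper : (minpoly F B).natDegree ≤ n := by
    have := Polynomial.natDegree_le_of_dvd (Matrix.minpoly_dvd_charpoly B)
      B.charpoly_monic.ne_zero
    simpa [Matrix.charpoly_natDegree_eq_dim] using this
  by_contra hne
  set d := (minpoly F B).natDegree with hdd
  have hd : d ≤ m + 1 := by omega
  have hd1 : 1 ≤ d := minpoly.natDegree_pos hInt
  have haev := minpoly.aeval F B
  rw [Polynomial.aeval_eq_sum_range] at haev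
  have hsum : ∑ i ∈ Finset.range (d + 1), (minpoly F B).coeff i • (B ^ i).mulVec v = 0 := by
    have := congrArg (fun M => mulVecRight v M) haev
    simpa [map_sum, map_smul] using this
  rw [Finset.sum_range_succ, hmon.coeff_natDegree, one_smul] at hsum
  have hmem : (B ^ d).mulVec v ∈ Wsp S v (d - 1) := by
    rw [eq_neg_of_add_eq_zero_right hsum]
    refine Submodule.neg_mem _ (Submodule.sum_mem _ fun i hi => ?_)
    have hi' : i < d := Finset.mem_range.1 hi
    exact Submodule.smul_mem _ _
      (Wsp_mono S v (by omega : i ≤ d - 1) (hpow i (by omega)).1)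
  exact (hpow d hd).2 hd1 hmem
end

section
/- Let A be a 5×5 matrix over an algebraically closed field F whose minimal polynomial has degree 3. Then the F-linear span of I, A, A² contains a nonzero rank-one matrix. -/
open Polynomial Module Submodule Matrix

section RankLemmas

variable {F : Type*} [Field F]

private lemma rank_comp_core {n : ℕ} (f g : (Fin n → F) →ₗ[F] (Fin n → F)) :
    finrank F ↥(LinearMap.range (f ∘ₗ g)) +
      finrank F ↥(LinearMap.ker f ⊓ LinearMap.range g) =
      finrank F ↥(LinearMap.range g) := by
  have h1 : LinearMap.range (f ∘ₗ g) = (LinearMap.range g).map f :=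
    LinearMap.range_comp g f
  have h2 := LinearMap.finrank_range_add_finrank_ker (f.domRestrict (LinearMap.range g))
  rw [LinearMap.range_domRestrict, LinearMap.ker_domRestrict] at h2
  have h3 : finrank F ↥(Submodule.comap (LinearMap.range g).subtype (LinearMap.ker f)) =
      finrank F ↥(LinearMap.ker f ⊓ LinearMap.range g) := by
    rw [← Submodule.finrank_map_subtype_eq (LinearMap.range g), Submodule.map_comap_subtype,
      inf_comm]
  rw [h3] at h2
  rw [h1]
  simpa using h2

private lemma sylvester {n : ℕ} (M N : Matrix (Fin n) (Fin n) F) :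
    M.rank + N.rank ≤ n + (M * N).rank := by
  have hc := rank_comp_core M.mulVecLin N.mulVecLin
  rw [← Matrix.mulVecLin_mul] at hc
  have hk := LinearMap.finrank_range_add_finrank_ker M.mulVecLin
  have hn : finrank F (Fin n → F) = n := by simp
  rw [hn] at hk
  have hle : finrank F ↥(LinearMap.ker M.mulVecLin ⊓ LinearMap.range N.mulVecLin) ≤
      finrank F ↥(LinearMap.ker M.mulVecLin) := Submodule.finrank_mono inf_le_left
  simp only [Matrix.rank] at *
  omega

private lemma frob_zero {n : ℕ} (M N P : Matrix (Fin n) (Fin n) F) (h : M * N * P = 0) :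
    (M * N).rank + (N * P).rank ≤ N.rank := by
  have hc := rank_comp_core M.mulVecLin N.mulVecLin
  rw [← Matrix.mulVecLin_mul] at hc
  have hle : finrank F ↥(LinearMap.range ((N * P).mulVecLin)) ≤
      finrank F ↥(LinearMap.ker M.mulVecLin ⊓ LinearMap.range N.mulVecLin) := by
    apply Submodule.finrank_mono
    refine le_inf ?_ ?_
    · rw [LinearMap.range_le_ker_iff, ← Matrix.mulVecLin_mul, ← mul_assoc, h,
        Matrix.mulVecLin_zero]
    · rw [Matrix.mulVecLin_mul]; exact LinearMap.range_comp_le_range _ _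
  simp only [Matrix.rank] at *
  omega

private lemma matrix_ne_zero_mvl {n : ℕ} {M : Matrix (Fin n) (Fin n) F}
    (h : M.mulVecLin = 0) : M = 0 := by
  ext i j
  have h2 : M.mulVecLin (Pi.single j 1) = 0 := by rw [h]; rfl
  simpa [Matrix.mulVecLin_apply, Matrix.mulVec_single] using congrFun h2 i

private lemma one_le_rank_of_ne_zero {n : ℕ} {M : Matrix (Fin n) (Fin n) F} (h : M ≠ 0) :
    1 ≤ M.rank := by
  rw [Nat.one_le_iff_ne_zero]
  intro h0
  apply h
  apply matrix_ne_zero_mvl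
  rw [← LinearMap.range_eq_bot, ← Submodule.finrank_eq_zero]
  exact h0

end RankLemmas

theorem stmt_14 {F : Type*} [Field F] [IsAlgClosed F]
    (A : Matrix (Fin 5) (Fin 5) F) (h : (minpoly F A).natDegree = 3) :
    ∃ a b c : F,
      (a • (1 : Matrix (Fin 5) (Fin 5) F) + b • A + c • (A * A)).rank = 1 := by
  classical
  -- factor the minimal polynomial
  have hA : IsIntegral F A := .of_finite F A
  have hmon : (minpoly F A).Monic := minpoly.monic hA
  have hsplits : (minpoly F A).Splits := IsAlgClosed.splits _
  have hcard : Multiset.card (minpoly F A).roots = 3 := by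
    rw [Polynomial.splits_iff_card_roots.mp hsplits, h]
  obtain ⟨x, y, z, hxyz⟩ := Multiset.card_eq_three.mp hcard
  have hfac : minpoly F A = (X - C x) * ((X - C y) * (X - C z)) := by
    have := hsplits.eq_prod_roots_of_monic hmon
    rw [hxyz] at this
    simpa [mul_assoc] using this
  have hprod : (A - x • 1) * ((A - y • 1) * (A - z • 1)) = 0 := by
    have h0 := minpoly.aeval F A
    rw [hfac] at h0
    simpa [Algebra.algebraMap_eq_smul_one] using h0
  -- no quadratic polynomial kills A
  have key2 : ∀ r s : F, (A - r • 1) * (A - s • 1) ≠ 0 := by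
    intro r s h0
    have hdvd : minpoly F A ∣ (X - C r) * (X - C s) :=
      minpoly.dvd F A (by simpa [Algebra.algebraMap_eq_smul_one] using h0)
    have hne : ((X - C r) * (X - C s) : F[X]) ≠ 0 :=
      mul_ne_zero (X_sub_C_ne_zero r) (X_sub_C_ne_zero s)
    have := Polynomial.natDegree_le_of_dvd hdvd hne
    rw [Polynomial.natDegree_mul (X_sub_C_ne_zero r) (X_sub_C_ne_zero s)] at this
    simp [h, natDegree_X_sub_C] at this
  have hcomm : ∀ r s : F, (A - r • 1) * (A - s • 1) = (A - s • 1) * (A - r • 1) := by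
    intro r s
    simp only [sub_mul, mul_sub, Matrix.smul_mul, Matrix.mul_smul, one_mul, mul_one]
    module
  -- it suffices to find two roots whose linear factors multiply to a rank-one matrix
  suffices hsuff : ∃ r s : F, ((A - r • 1) * (A - s • 1)).rank = 1 by
    obtain ⟨r, s, hrs⟩ := hsuff
    refine ⟨r * s, -(r + s), 1, ?_⟩
    have hid : (r * s) • (1 : Matrix (Fin 5) (Fin 5) F) + (-(r + s)) • A + (1 : F) • (A * A) =
        (A - r • 1) * (A - s • 1) := by
      simp only [sub_mul, mul_sub, Matrix.smul_mul, Matrix.mul_smul, one_mul, mul_one,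
        smul_smul]
      module
    rw [hid]
    exact hrs
  -- rearranged zero products
  have hz2 : (A - y • 1) * ((A - x • 1) * (A - z • 1)) = 0 := by
    rw [← mul_assoc, hcomm y x, mul_assoc]; exact hprod
  have hz3 : (A - z • 1) * ((A - x • 1) * (A - y • 1)) = 0 := by
    rw [← mul_assoc, hcomm z x, mul_assoc, hcomm z y, ← mul_assoc, mul_assoc]; exact hprod
  -- each root has nontrivial eigenspace
  have hker : ∀ r s t : F, (A - r • 1) * ((A - s • 1) * (A - t • 1)) = 0 →
      LinearMap.ker (A - r • 1).mulVecLin ≠ ⊥ := by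
    intro r s t h0 hbot
    apply key2 s t
    have hc : (A - r • 1).mulVecLin ∘ₗ ((A - s • 1) * (A - t • 1)).mulVecLin = 0 := by
      rw [← Matrix.mulVecLin_mul, h0, Matrix.mulVecLin_zero]
    have hle := LinearMap.range_le_ker_iff.mpr hc
    rw [hbot, le_bot_iff, LinearMap.range_eq_bot] at hle
    exact matrix_ne_zero_mvl hle
  have hrn : ∀ r : F, (A - r • 1).rank + finrank F ↥(LinearMap.ker (A - r • 1).mulVecLin) = 5 := by
    intro r
    have := LinearMap.finrank_range_add_finrank_ker (A - r • 1).mulVecLin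
    simpa [Matrix.rank] using this
  have hker1 : ∀ r s t : F, (A - r • 1) * ((A - s • 1) * (A - t • 1)) = 0 →
      1 ≤ finrank F ↥(LinearMap.ker (A - r • 1).mulVecLin) := by
    intro r s t h0
    rw [Nat.one_le_iff_ne_zero]
    intro hh
    exact hker r s t h0 (Submodule.finrank_eq_zero.mp hh)
  -- triple root lemma
  have L1 : ∀ r : F, (A - r • 1) * ((A - r • 1) * (A - r • 1)) = 0 →
      ((A - r • 1) * (A - r • 1)).rank = 1 := by
    intro r h0
    have hf := frob_zero (A - r • 1) (A - r • 1) (A - r • 1) (by rw [mul_assoc]; exact h0)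
    have hs := _root_.sylvester (A - r • 1) (A - r • 1)
    have h1 := one_le_rank_of_ne_zero (key2 r r)
    omega
  -- double root lemma
  have L2 : ∀ r s : F, (A - r • 1) * ((A - r • 1) * (A - s • 1)) = 0 →
      1 ≤ finrank F ↥(LinearMap.ker (A - r • 1).mulVecLin) →
      ((A - r • 1) * (A - r • 1)).rank = 1 ∨ ((A - r • 1) * (A - s • 1)).rank = 1 := by
    intro r s h0 hk
    have hf := frob_zero (A - r • 1) (A - r • 1) (A - s • 1) (by rw [mul_assoc]; exact h0)
    have hs := _root_.sylvester (A - r • 1) (A - r • 1)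
    have h1 := one_le_rank_of_ne_zero (key2 r r)
    have h2 := one_le_rank_of_ne_zero (key2 r s)
    have h3 := hrn r
    omega
  -- eigen-kernel facts for the distinct-roots case
  have heig : ∀ (r : F) (v : Fin 5 → F), v ∈ LinearMap.ker (A - r • 1).mulVecLin →
      A *ᵥ v = r • v := by
    intro r v hv
    rw [LinearMap.mem_ker, Matrix.mulVecLin_apply, Matrix.sub_mulVec,
      Matrix.smul_mulVec, Matrix.one_mulVec, sub_eq_zero] at hv
    exact hv
  have hBv : ∀ (r s : F) (v : Fin 5 → F), A *ᵥ v = r • v →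
      (A - s • 1) *ᵥ v = (r - s) • v := by
    intro r s v hv
    rw [Matrix.sub_mulVec, Matrix.smul_mulVec, Matrix.one_mulVec, hv, sub_smul]
  have hdisj : ∀ r s : F, r ≠ s →
      LinearMap.ker (A - r • 1).mulVecLin ⊓ LinearMap.ker (A - s • 1).mulVecLin = ⊥ := by
    intro r s hrs
    rw [eq_bot_iff]
    rintro v hv
    obtain ⟨h1, h2⟩ := Submodule.mem_inf.mp hv
    have e1 := heig r v h1
    have e2 := heig s v h2
    have h3 : (r - s) • v = 0 := by rw [sub_smul, ← e1, ← e2, sub_self]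
    have hv0 : v = 0 := by
      rcases smul_eq_zero.mp h3 with h' | h'
      · exact absurd (sub_eq_zero.mp h') hrs
      · exact h'
    simp [hv0]
  have hdisj2 : ∀ r s t : F, r ≠ s → r ≠ t →
      LinearMap.ker (A - r • 1).mulVecLin ⊓
        LinearMap.ker ((A - s • 1) * (A - t • 1)).mulVecLin = ⊥ := by
    intro r s t hrs hrt
    rw [eq_bot_iff]
    rintro v hv
    obtain ⟨h1, h2⟩ := Submodule.mem_inf.mp hv
    have e1 := heig r v h1
    rw [LinearMap.mem_ker, Matrix.mulVecLin_apply, ← Matrix.mulVec_mulVec,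
      hBv r t v e1, Matrix.mulVec_smul, hBv r s v e1, smul_smul] at h2
    have hv0 : v = 0 := by
      rcases smul_eq_zero.mp h2 with h' | h'
      · rcases mul_eq_zero.mp h' with h'' | h''
        · exact absurd (sub_eq_zero.mp h'') hrt
        · exact absurd (sub_eq_zero.mp h'') hrs
      · exact h'
    simp [hv0]
  have hsupker : ∀ s t : F,
      LinearMap.ker (A - s • 1).mulVecLin ⊔ LinearMap.ker (A - t • 1).mulVecLin ≤
        LinearMap.ker ((A - s • 1) * (A - t • 1)).mulVecLin := by
    intro s t
    apply sup_le
    · intro v hv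
      rw [LinearMap.mem_ker, Matrix.mulVecLin_apply] at hv ⊢
      rw [hcomm s t, ← Matrix.mulVec_mulVec, hv, Matrix.mulVec_zero]
    · intro v hv
      rw [LinearMap.mem_ker, Matrix.mulVecLin_apply] at hv ⊢
      rw [← Matrix.mulVec_mulVec, hv, Matrix.mulVec_zero]
  have dims : ∀ r s t : F, r ≠ s → r ≠ t → s ≠ t →
      finrank F ↥(LinearMap.ker (A - r • 1).mulVecLin) +
      finrank F ↥(LinearMap.ker (A - s • 1).mulVecLin) +
      finrank F ↥(LinearMap.ker (A - t • 1).mulVecLin) ≤ 5 := by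
    intro r s t hrs hrt hst
    have hd1 := Submodule.finrank_sup_add_finrank_inf_eq
      (LinearMap.ker (A - s • 1).mulVecLin) (LinearMap.ker (A - t • 1).mulVecLin)
    rw [hdisj s t hst, finrank_bot] at hd1
    have hle1 := Submodule.finrank_mono (hsupker s t)
    have hd2 := Submodule.finrank_sup_add_finrank_inf_eq
      (LinearMap.ker (A - r • 1).mulVecLin)
      (LinearMap.ker ((A - s • 1) * (A - t • 1)).mulVecLin)
    rw [hdisj2 r s t hrs hrt, finrank_bot] at hd2
    have hle2 : finrank F ↥(LinearMap.ker (A - r • 1).mulVecLin ⊔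
        LinearMap.ker ((A - s • 1) * (A - t • 1)).mulVecLin) ≤ 5 := by
      have := Submodule.finrank_le (LinearMap.ker (A - r • 1).mulVecLin ⊔
        LinearMap.ker ((A - s • 1) * (A - t • 1)).mulVecLin)
      simpa using this
    omega
  have main3 : ∀ r s t : F, (A - r • 1) * ((A - s • 1) * (A - t • 1)) = 0 →
      finrank F ↥(LinearMap.ker (A - r • 1).mulVecLin) = 1 →
      ((A - s • 1) * (A - t • 1)).rank = 1 := by
    intro r s t h0 hk1
    have hc : (A - r • 1).mulVecLin ∘ₗ ((A - s • 1) * (A - t • 1)).mulVecLin = 0 := by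
      rw [← Matrix.mulVecLin_mul, h0, Matrix.mulVecLin_zero]
    have hle := Submodule.finrank_mono (LinearMap.range_le_ker_iff.mpr hc)
    rw [hk1] at hle
    have h2 := one_le_rank_of_ne_zero (key2 s t)
    have h3 : ((A - s • 1) * (A - t • 1)).rank = finrank F
        ↥(LinearMap.range ((A - s • 1) * (A - t • 1)).mulVecLin) := rfl
    omega
  -- case analysis on root pattern
  by_cases hxy : x = y
  · subst hxy
    by_cases hxz : x = z
    · subst hxz
      exact ⟨x, x, L1 x hprod⟩
    · rcases L2 x z hprod (hker1 x x z hprod) with h' | h'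
      · exact ⟨x, x, h'⟩
      · exact ⟨x, z, h'⟩
  · by_cases hyz : y = z
    · subst hyz
      have h0 : (A - y • 1) * ((A - y • 1) * (A - x • 1)) = 0 := by
        rw [hcomm x y] at hz3; exact hz3
      rcases L2 y x h0 (hker1 y y x h0) with h' | h'
      · exact ⟨y, y, h'⟩
      · exact ⟨y, x, h'⟩
    · by_cases hxz : x = z
      · subst hxz
        have h0 : (A - x • 1) * ((A - x • 1) * (A - y • 1)) = 0 := hz3
        rcases L2 x y h0 (hker1 x x y h0) with h' | h'
        · exact ⟨x, x, h'⟩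
        · exact ⟨x, y, h'⟩
      · -- all distinct
        have k1 := hker1 x y z hprod
        have k2 := hker1 y x z hz2
        have k3 := hker1 z x y hz3
        have hd := dims x y z hxy hxz hyz
        have : finrank F ↥(LinearMap.ker (A - x • 1).mulVecLin) = 1 ∨
            finrank F ↥(LinearMap.ker (A - y • 1).mulVecLin) = 1 ∨
            finrank F ↥(LinearMap.ker (A - z • 1).mulVecLin) = 1 := by omega
        rcases this with h' | h' | h'
        · exact ⟨y, z, main3 x y z hprod h'⟩
        · exact ⟨x, z, main3 y x z hz2 h'⟩
        · exact ⟨x, y, main3 z x y hz3 h'⟩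
end
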